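/- Let N be a binary phylogenetic network with a non-temporal labelling having h inrets (reticulations whose two incoming arcs are both vertical). Then there is a network obtained from N by h leaf additions that admits an HGT-consistent labelling extending the given one; in particular L_OR(N) ≤ V_OR(N). -/

import Mathlib

namespace PhyloNet

/-- A binary phylogenetic network, encoded on vertex set `verts ⊆ ℕ`. -/
structure Network where
  verts : Finset ℕ
  arc : ℕ → ℕ → Bool
  root : ℕ
  root_mem : root ∈ verts
  arc_mem : ∀ u v : ℕ, arc u v = true → u ∈ verts ∧ v ∈ verts
  acyclic : ∀ v : ℕ, ¬ Relation.TransGen (fun a b : ℕ => arc a b = true) v v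
  root_indeg : (verts.filter fun u => arc u root = true).card = 0
  root_outdeg : (verts.filter fun w => arc root w = true).card = 1
  nonroot_deg : ∀ v ∈ verts, v ≠ root →
    ((verts.filter fun u => arc u v = true).card = 1 ∧
      (verts.filter fun w => arc v w = true).card = 2) ∨
    ((verts.filter fun u => arc u v = true).card = 2 ∧
      (verts.filter fun w => arc v w = true).card = 1) ∨
    ((verts.filter fun u => arc u v = true).card = 1 ∧
      (verts.filter fun w => arc v w = true).card = 0)

def inDeg (N : Network) (v : ℕ) : ℕ := (N.verts.filter fun u => N.arc u v = true).card

def outDeg (N : Network) (v : ℕ) : ℕ := (N.verts.filter fun w => N.arc v w = true).card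

def IsLeaf (N : Network) (v : ℕ) : Prop := v ∈ N.verts ∧ inDeg N v = 1 ∧ outDeg N v = 0

def IsRet (N : Network) (v : ℕ) : Prop := v ∈ N.verts ∧ inDeg N v = 2

def IsTreeVert (N : Network) (v : ℕ) : Prop := v ∈ N.verts ∧ inDeg N v = 1 ∧ outDeg N v = 2

def IsInternal (N : Network) (v : ℕ) : Prop := v ∈ N.verts ∧ v ≠ N.root ∧ ¬ IsLeaf N v

def IsTree (N : Network) : Prop := ∀ v : ℕ, ¬ IsRet N v

noncomputable def retCount (N : Network) : ℕ := {v : ℕ | IsRet N v}.ncard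

/-- Tree-child: every non-leaf vertex has a child that is a tree vertex or a leaf. -/
def IsTreeChild (N : Network) : Prop :=
  ∀ v ∈ N.verts, ¬ IsLeaf N v → ∃ w : ℕ, N.arc v w = true ∧ (IsTreeVert N w ∨ IsLeaf N w)

/-- An omnian: an internal vertex all of whose children are reticulations. -/
def IsOmnian (N : Network) (v : ℕ) : Prop :=
  IsInternal N v ∧ ∀ w : ℕ, N.arc v w = true → IsRet N w

noncomputable def omnianCount (N : Network) : ℕ := {v : ℕ | IsOmnian N v}.ncard

/-- `N'` is obtained from `N` by adding a leaf to the arc `uv`: the arc is subdivided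
by a fresh vertex `w`, and a fresh leaf `x` is attached to `w`. -/
def IsLeafAdditionOn (N N' : Network) (u v : ℕ) : Prop :=
  N.arc u v = true ∧ ∃ w x : ℕ, w ∉ N.verts ∧ x ∉ N.verts ∧ w ≠ x ∧
    N'.verts = insert w (insert x N.verts) ∧ N'.root = N.root ∧
    ∀ a b : ℕ, (N'.arc a b = true ↔
      ((N.arc a b = true ∧ ¬ (a = u ∧ b = v)) ∨ (a = u ∧ b = w) ∨
        (a = w ∧ b = v) ∨ (a = w ∧ b = x)))

def IsLeafAddition (N N' : Network) : Prop := ∃ u v : ℕ, IsLeafAdditionOn N N' u v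

/-- `N'` is obtained from `N` by adding a leaf to a reticulation arc. -/
def IsRetArcLeafAddition (N N' : Network) : Prop :=
  ∃ u v : ℕ, IsRet N v ∧ IsLeafAdditionOn N N' u v

/-- `P` holds after exactly `k` steps of relation `step` starting from `N`. -/
def ReachableBy (step : Network → Network → Prop) (N : Network) (k : ℕ)
    (P : Network → Prop) : Prop :=
  ∃ M : ℕ → Network, M 0 = N ∧ (∀ i : ℕ, i < k → step (M i) (M (i + 1))) ∧ P (M k)

/-- The minimum number of leaf additions needed to bring `N` into the class `P`. -/
noncomputable def leafAddDist (P : Network → Prop) (N : Network) : ℕ :=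
  sInf {k : ℕ | ReachableBy IsLeafAddition N k P}

noncomputable def LTC (N : Network) : ℕ := leafAddDist IsTreeChild N

/-- Reduction of a cherry (x,y): delete the leaf x and suppress its parent p
(whose own parent is q, gaining the arc q → y). -/
def ReducesCherry (N N' : Network) (x y : ℕ) : Prop :=
  ∃ p q : ℕ, IsLeaf N x ∧ IsLeaf N y ∧ x ≠ y ∧
    N.arc p x = true ∧ N.arc p y = true ∧ N.arc q p = true ∧
    N'.verts = (N.verts.erase x).erase p ∧ N'.root = N.root ∧
    ∀ a b : ℕ, (N'.arc a b = true ↔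
      (N.arc a b = true ∧ a ≠ p ∧ b ≠ p ∧ b ≠ x) ∨ (a = q ∧ b = y))

/-- Reduction of a reticulated cherry (x,y): delete the arc from the parent p_y of y
to the reticulation parent p_x of x, and clean up (suppressing p_x and p_y). -/
def ReducesRetCherry (N N' : Network) (x y : ℕ) : Prop :=
  ∃ px py z q : ℕ, IsLeaf N x ∧ IsLeaf N y ∧ IsRet N px ∧
    N.arc px x = true ∧ N.arc py px = true ∧ N.arc py y = true ∧
    N.arc z px = true ∧ z ≠ py ∧ N.arc q py = true ∧
    N'.verts = (N.verts.erase px).erase py ∧ N'.root = N.root ∧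
    ∀ a b : ℕ, (N'.arc a b = true ↔
      (N.arc a b = true ∧ a ≠ px ∧ a ≠ py ∧ b ≠ px ∧ b ≠ py) ∨
        (a = z ∧ b = x) ∨ (a = q ∧ b = y))

def CherryStep (N N' : Network) : Prop :=
  ∃ x y : ℕ, ReducesCherry N N' x y ∨ ReducesRetCherry N N' x y

/-- A network consisting of the root and a single leaf. -/
def IsSingleLeaf (N : Network) : Prop := ∃ x : ℕ, x ≠ N.root ∧ N.verts = {N.root, x}

/-- Orchard: reducible to a single leaf by cherry and reticulated cherry reductions. -/
def IsOrchard (N : Network) : Prop :=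
  ∃ N' : Network, Relation.ReflTransGen CherryStep N N' ∧ IsSingleLeaf N'

noncomputable def LOR (N : Network) : ℕ := leafAddDist IsOrchard N

/-- Tree-based: there is a spanning tree (a choice of one incoming arc for each
non-root vertex) all of whose leaves are leaves of `N`. -/
def IsTreeBased (N : Network) : Prop :=
  ∃ T : ℕ → ℕ → Bool, (∀ u v : ℕ, T u v = true → N.arc u v = true) ∧
    (∀ v ∈ N.verts, v ≠ N.root → (N.verts.filter fun u => T u v = true).card = 1) ∧
    (∀ v ∈ N.verts, ¬ IsLeaf N v → ∃ w : ℕ, T v w = true)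

noncomputable def LTB (N : Network) : ℕ := leafAddDist IsTreeBased N

/-- A zig-zag trail: a nonempty duplicate-free sequence of arcs in which
consecutive arcs share a tail or share a head. -/
def IsZigZag (N : Network) (s : List (ℕ × ℕ)) : Prop :=
  s ≠ [] ∧ s.Nodup ∧ (∀ a ∈ s, N.arc a.1 a.2 = true) ∧
    List.Chain' (fun a b : ℕ × ℕ => a.1 = b.1 ∨ a.2 = b.2) s

def IsMaximalZigZag (N : Network) (s : List (ℕ × ℕ)) : Prop :=
  IsZigZag N s ∧ ∀ t : List (ℕ × ℕ), IsZigZag N t → s.Sublist t → t.length = s.length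

/-- A W-fence: a maximal zig-zag trail of even length whose two end-arc tails
are both reticulations. -/
def IsWFence (N : Network) (s : List (ℕ × ℕ)) : Prop :=
  IsMaximalZigZag N s ∧ s.length % 2 = 0 ∧ 2 ≤ s.length ∧
    IsRet N (s.headD (0, 0)).1 ∧ IsRet N (s.getLastD (0, 0)).1

/-- An N-fence: a maximal zig-zag trail of odd length exactly one of whose
end-arc tails is a reticulation. -/
def IsNFence (N : Network) (s : List (ℕ × ℕ)) : Prop :=
  IsMaximalZigZag N s ∧ s.length % 2 = 1 ∧
    Xor' (IsRet N (s.headD (0, 0)).1) (IsRet N (s.getLastD (0, 0)).1)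

/-- A zig-zag decomposition: a set of maximal zig-zag trails partitioning the
non-root arcs of the network. -/
def IsZigZagDecomposition (N : Network) (D : Set (List (ℕ × ℕ))) : Prop :=
  (∀ s ∈ D, IsMaximalZigZag N s) ∧
  (∀ s ∈ D, ∀ p ∈ s, p.1 ≠ N.root) ∧
  (∀ a b : ℕ, N.arc a b = true → a ≠ N.root → ∃! s : List (ℕ × ℕ), s ∈ D ∧ (a, b) ∈ s)

/-- A cherry shape: two arcs with a common tail. -/
def IsCherryShape (N : Network) (s : Set (ℕ × ℕ)) : Prop :=
  ∃ p x y : ℕ, x ≠ y ∧ N.arc p x = true ∧ N.arc p y = true ∧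
    s = {(p, x), (p, y)}

/-- A reticulated cherry shape: arcs p_x x, p_y p_x, p_y y where p_x is a reticulation;
its middle arc is p_y p_x. -/
def IsRetCherryShape (N : Network) (s : Set (ℕ × ℕ)) : Prop :=
  ∃ x y px py : ℕ, IsRet N px ∧ N.arc px x = true ∧ N.arc py px = true ∧
    N.arc py y = true ∧ y ≠ px ∧ s = {(px, x), (py, px), (py, y)}

/-- `s` is a reticulated cherry shape with middle arc `(u, r)`. -/
def IsMiddleArcOf (N : Network) (s : Set (ℕ × ℕ)) (u r : ℕ) : Prop :=
  ∃ x y : ℕ, IsRet N r ∧ N.arc r x = true ∧ N.arc u r = true ∧ N.arc u y = true ∧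
    y ≠ r ∧ s = {(r, x), (u, r), (u, y)}

/-- A cherry cover: cherry shapes and reticulated cherry shapes covering every
non-root arc exactly once. -/
def IsCherryCover (N : Network) (P : Set (Set (ℕ × ℕ))) : Prop :=
  (∀ s ∈ P, IsCherryShape N s ∨ IsRetCherryShape N s) ∧
  (∀ a b : ℕ, N.arc a b = true → a ≠ N.root →
    ∃! s : Set (ℕ × ℕ), s ∈ P ∧ (a, b) ∈ s)

/-- The internal vertices of a shape are the tails of its arcs. -/
def shapeInternals (s : Set (ℕ × ℕ)) : Set ℕ := {p : ℕ | ∃ x : ℕ, (p, x) ∈ s}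

/-- The endpoints of a shape: heads of its arcs that are not tails of its arcs. -/
def shapeEndpoints (s : Set (ℕ × ℕ)) : Set ℕ :=
  {x : ℕ | (∃ p : ℕ, (p, x) ∈ s) ∧ ∀ y : ℕ, (x, y) ∉ s}

/-- In the auxiliary graph, shape `B` is directly above shape `C` if an internal
vertex of `C` is an endpoint of `B`. -/
def DirectlyAbove (B C : Set (ℕ × ℕ)) : Prop :=
  ∃ v : ℕ, v ∈ shapeEndpoints B ∧ v ∈ shapeInternals C

/-- The auxiliary graph of the cherry cover `P` contains a directed cycle. -/
def HasCyclicAux (P : Set (Set (ℕ × ℕ))) : Prop :=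
  ∃ s ∈ P, Relation.TransGen
    (fun B C : Set (ℕ × ℕ) => B ∈ P ∧ C ∈ P ∧ DirectlyAbove B C) s s

/-- A non-temporal labelling of `N`. -/
def IsNonTemporal (N : Network) (t : ℕ → ℝ) : Prop :=
  (∀ u v : ℕ, N.arc u v = true → t u ≤ t v) ∧
  (∀ u v : ℕ, N.arc u v = true → t u = t v → IsRet N v) ∧
  (∀ u : ℕ, IsInternal N u → ∃ v : ℕ, N.arc u v = true ∧ t u < t v) ∧
  (∀ r u v : ℕ, IsRet N r → N.arc u r = true → N.arc v r = true → u ≠ v →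
    ¬ (t u = t r ∧ t v = t r))

/-- An inret: a reticulation with no incoming horizontal arc
(i.e. both incoming arcs vertical). -/
def Inret (N : Network) (t : ℕ → ℝ) (r : ℕ) : Prop :=
  IsRet N r ∧ ∀ u : ℕ, N.arc u r = true → t u ≠ t r

noncomputable def inretCount (N : Network) (t : ℕ → ℝ) : ℕ := {r : ℕ | Inret N t r}.ncard

/-- HGT-consistent labelling: a non-temporal labelling in which every reticulation
has exactly one incoming horizontal arc. -/
def IsHGTConsistent (N : Network) (t : ℕ → ℝ) : Prop :=
  IsNonTemporal N t ∧ ∀ r : ℕ, IsRet N r → ∃! u : ℕ, N.arc u r = true ∧ t u = t r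

/-- V_OR: the minimum number of inrets over all non-temporal labellings. -/
noncomputable def VOR (N : Network) : ℕ :=
  sInf {k : ℕ | ∃ t : ℕ → ℝ, IsNonTemporal N t ∧ inretCount N t = k}

/-- The network `N` is the result of the vertex-cover reduction applied to `G`. -/
def IsVCReduction {α : Type} [Fintype α] [DecidableEq α] (G : SimpleGraph α)
    (N : Network) : Prop :=
  ∃ (R W L M : α → ℕ → ℕ) (P : α → ℕ) (S : ℕ → ℕ) (rho : ℕ)
    (e : ℕ → α) (pi tau : α → α → ℕ),
    (∀ v : α, ∃! i : ℕ, 1 ≤ i ∧ i ≤ Fintype.card α ∧ e i = v) ∧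
    (∀ v u : α, G.Adj v u → pi v u ∈ ({1, 2, 3} : Set ℕ)) ∧
    (∀ v u u' : α, G.Adj v u → G.Adj v u' → pi v u = pi v u' → u = u') ∧
    (∀ v u : α, G.Adj v u → tau v u ∈ ({5, 6, 7} : Set ℕ)) ∧
    (∀ v u u' : α, G.Adj v u → G.Adj v u' → tau v u = tau v u' → u = u') ∧
    Function.Injective
      (fun z : (α × Fin 8) ⊕ (α × Fin 7) ⊕ (α × Fin 5) ⊕ (α × Fin 4) ⊕ α ⊕
          (Fin (Fintype.card α - 1)) ⊕ Unit =>
        match z with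
        | Sum.inl (v, i) => R v i.1
        | Sum.inr (Sum.inl (v, i)) => W v (i.1 + 1)
        | Sum.inr (Sum.inr (Sum.inl (v, i))) => L v (i.1 + 1)
        | Sum.inr (Sum.inr (Sum.inr (Sum.inl (v, i)))) => M v (i.1 + 1)
        | Sum.inr (Sum.inr (Sum.inr (Sum.inr (Sum.inl v)))) => P v
        | Sum.inr (Sum.inr (Sum.inr (Sum.inr (Sum.inr (Sum.inl i))))) => S (i.1 + 1)
        | Sum.inr (Sum.inr (Sum.inr (Sum.inr (Sum.inr (Sum.inr _))))) => rho) ∧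
    N.root = rho ∧
    (∀ x : ℕ, x ∈ N.verts ↔
      (∃ v i, i ≤ 7 ∧ x = R v i) ∨ (∃ v i, 1 ≤ i ∧ i ≤ 7 ∧ x = W v i) ∨
      (∃ v i, 1 ≤ i ∧ i ≤ 5 ∧ x = L v i) ∨ (∃ v i, 1 ≤ i ∧ i ≤ 4 ∧ x = M v i) ∨
      (∃ v, x = P v) ∨ (∃ i, 1 ≤ i ∧ i ≤ Fintype.card α - 1 ∧ x = S i) ∨ x = rho) ∧
    (∀ a b : ℕ, N.arc a b = true ↔
      (a = rho ∧ b = S 1) ∨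
      (∃ i, 1 ≤ i ∧ i ≤ Fintype.card α - 2 ∧ a = S i ∧ b = S (i + 1)) ∨
      (∃ i, 1 ≤ i ∧ i ≤ Fintype.card α - 1 ∧ a = S i ∧ b = P (e i)) ∨
      (a = S (Fintype.card α - 1) ∧ b = P (e (Fintype.card α))) ∨
      (∃ v, a = P v ∧ (b = M v 4 ∨ b = W v 7)) ∨
      (∃ v, a = M v 4 ∧ (b = M v 3 ∨ b = R v 0)) ∨
      (∃ v, a = M v 3 ∧ (b = M v 2 ∨ b = W v 6)) ∨
      (∃ v, a = M v 2 ∧ (b = M v 1 ∨ b = W v 5)) ∨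
      (∃ v, a = M v 1 ∧ (b = R v 0 ∨ b = W v 4)) ∨
      (∃ v, a = R v 0 ∧ b = R v 1) ∨
      (∃ v i, 1 ≤ i ∧ i ≤ 6 ∧ a = W v i ∧ (b = R v i ∨ b = R v (i + 1))) ∨
      (∃ v, a = W v 7 ∧ (b = R v 7 ∨ b = L v 5)) ∨
      (∃ v i, 1 ≤ i ∧ i ≤ 4 ∧ a = R v i ∧ b = L v i) ∨
      (∃ u v, G.Adj u v ∧ a = R u (tau u v) ∧ b = W v (pi v u)))


open Relation Finset

lemma arc_irrefl (N : Network) (v : ℕ) : N.arc v v ≠ true := by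
  intro h
  exact N.acyclic v (Relation.TransGen.single h)

lemma arc_ne (N : Network) {u v : ℕ} (h : N.arc u v = true) : u ≠ v := by
  rintro rfl; exact arc_irrefl N u h

/-- pigeonhole: a nonempty finite set where every element has a predecessor in the
set yields a cycle. -/
lemma cycle_of_preds (N : Network) (A : Finset ℕ) (hA : A.Nonempty)
    (hpred : ∀ v ∈ A, ∃ u ∈ A, N.arc u v = true) :
    ∃ v, Relation.TransGen (fun a b : ℕ => N.arc a b = true) v v := by
  classical
  obtain ⟨a, ha⟩ := hA
  choose f hf1 hf2 using hpred
  let F : ℕ → ℕ := fun x => if hx : x ∈ A then f x hx else x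
  let g : ℕ → ℕ := fun n => F^[n] a
  have hgs : ∀ n, g (n+1) = F (g n) := fun n => Function.iterate_succ_apply' F n a
  have hg : ∀ n, g n ∈ A := by
    intro n
    induction n with
    | zero => exact ha
    | succ n ih => rw [hgs]; show (if hx : g n ∈ A then f (g n) hx else g n) ∈ A
                   rw [dif_pos ih]; exact hf1 _ ih
  have harc : ∀ n, N.arc (g (n+1)) (g n) = true := by
    intro n
    rw [hgs]
    show N.arc (if hx : g n ∈ A then f (g n) hx else g n) (g n) = true
    rw [dif_pos (hg n)]; exact hf2 _ (hg n)
  have hchain : ∀ d k, Relation.TransGen (fun a b : ℕ => N.arc a b = true)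
      (g (k + (d + 1))) (g k) := by
    intro d
    induction d with
    | zero => intro k; exact Relation.TransGen.single (harc k)
    | succ d ih =>
      intro k
      have h1 : (fun a b : ℕ => N.arc a b = true) (g (k + (d+1) + 1)) (g (k + (d+1))) :=
        harc _
      exact Relation.TransGen.head h1 (ih k)
  have hni : ¬ Function.Injective g := by
    intro hinj
    have hinj2 : Function.Injective (fun n : ℕ => (⟨g n, hg n⟩ : {x // x ∈ A})) := by
      intro m n h
      exact hinj (congrArg Subtype.val h)
    exact (Finite.of_injective _ hinj2).false
  rw [Function.not_injective_iff] at hni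
  obtain ⟨m, n, heq, hne⟩ := hni
  rcases Nat.lt_or_ge m n with h | h
  · obtain ⟨d, rfl⟩ := Nat.exists_eq_add_of_lt h
    refine ⟨g m, ?_⟩
    have h2 : Relation.TransGen (fun a b : ℕ => N.arc a b = true) (g (m + d + 1)) (g m) :=
      hchain d m
    rwa [← heq] at h2
  · have h' : n < m := lt_of_le_of_ne h (Ne.symm hne)
    obtain ⟨d, rfl⟩ := Nat.exists_eq_add_of_lt h'
    refine ⟨g n, ?_⟩
    have h2 : Relation.TransGen (fun a b : ℕ => N.arc a b = true) (g (n + d + 1)) (g n) :=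
      hchain d n
    rwa [heq] at h2

lemma indeg_pos_of_nonroot (N : Network) {v : ℕ} (hv : v ∈ N.verts) (hne : v ≠ N.root) :
    1 ≤ inDeg N v := by
  rcases N.nonroot_deg v hv hne with ⟨h, _⟩ | ⟨h, _⟩ | ⟨h, _⟩ <;> simp [inDeg, h]

lemma exists_parent (N : Network) {v : ℕ} (hv : v ∈ N.verts) (hne : v ≠ N.root) :
    ∃ u ∈ N.verts, N.arc u v = true := by
  have := indeg_pos_of_nonroot N hv hne
  rw [inDeg, Finset.one_le_card] at this
  obtain ⟨u, hu⟩ := this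
  rw [Finset.mem_filter] at hu
  exact ⟨u, hu.1, hu.2⟩

lemma root_reaches (N : Network) {v : ℕ} (hv : v ∈ N.verts) :
    Relation.ReflTransGen (fun a b : ℕ => N.arc a b = true) N.root v := by
  classical
  by_contra hcon
  set A : Finset ℕ := N.verts.filter
    (fun x => ¬ Relation.ReflTransGen (fun a b : ℕ => N.arc a b = true) N.root x) with hA
  have hne : A.Nonempty := ⟨v, by simp [hA, hv, hcon]⟩
  have hpred : ∀ x ∈ A, ∃ u ∈ A, N.arc u x = true := by
    intro x hx
    rw [hA, Finset.mem_filter] at hx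
    have hxr : x ≠ N.root := by
      rintro rfl; exact hx.2 Relation.ReflTransGen.refl
    obtain ⟨u, hu, harc⟩ := exists_parent N hx.1 hxr
    refine ⟨u, ?_, harc⟩
    rw [hA, Finset.mem_filter]
    refine ⟨hu, fun hr => hx.2 (hr.tail harc)⟩
  obtain ⟨c, hc⟩ := cycle_of_preds N A hne hpred
  exact N.acyclic c hc

lemma t_root_le (N : Network) (t : ℕ → ℝ) (ht : IsNonTemporal N t) {v : ℕ}
    (hv : v ∈ N.verts) : t N.root ≤ t v := by
  have h := root_reaches N hv
  clear hv
  induction h with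
  | refl => exact le_refl _
  | tail _ harc ih => exact le_trans ih (ht.1 _ _ harc)
lemma head_ne_root (N : Network) {u v : ℕ} (h : N.arc u v = true) : v ≠ N.root := by
  rintro rfl
  have hu := (N.arc_mem _ _ h).1
  have hmem : u ∈ N.verts.filter fun a => N.arc a N.root = true :=
    Finset.mem_filter.mpr ⟨hu, h⟩
  have hc := Finset.card_pos.mpr ⟨u, hmem⟩
  rw [N.root_indeg] at hc
  exact absurd hc (lt_irrefl 0)

lemma leaf_no_out (N : Network) {v b : ℕ} (hv : IsLeaf N v) (h : N.arc v b = true) :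
    False := by
  have hb := (N.arc_mem v b h).2
  have hmem : b ∈ N.verts.filter fun w => N.arc v w = true :=
    Finset.mem_filter.mpr ⟨hb, h⟩
  have hc := Finset.card_pos.mpr ⟨b, hmem⟩
  have h0 : (N.verts.filter fun w => N.arc v w = true).card = 0 := hv.2.2
  omega

lemma not_leaf_root (N : Network) : ¬ IsLeaf N N.root := by
  intro h
  have h1 := h.2.1
  rw [inDeg, N.root_indeg] at h1
  exact absurd h1 (by omega)

lemma card_one_unique {s : Finset ℕ} {P : ℕ → Prop} [DecidablePred P]
    (h : (s.filter P).card = 1) :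
    ∃ a, (a ∈ s ∧ P a) ∧ ∀ b, b ∈ s → P b → b = a := by
  obtain ⟨a, ha⟩ := Finset.card_eq_one.mp h
  refine ⟨a, ?_, ?_⟩
  · have : a ∈ s.filter P := by rw [ha]; exact Finset.mem_singleton_self a
    exact Finset.mem_filter.mp this
  · intro b hb hPb
    have : b ∈ s.filter P := Finset.mem_filter.mpr ⟨hb, hPb⟩
    rw [ha, Finset.mem_singleton] at this
    exact this

lemma card_two_pair {s : Finset ℕ} {P : ℕ → Prop} [DecidablePred P]
    (h : (s.filter P).card = 2) :
    ∃ a b, a ≠ b ∧ (a ∈ s ∧ P a) ∧ (b ∈ s ∧ P b) ∧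
      ∀ c, c ∈ s → P c → c = a ∨ c = b := by
  obtain ⟨a, b, hab, hs⟩ := Finset.card_eq_two.mp h
  refine ⟨a, b, hab, ?_, ?_, ?_⟩
  · have : a ∈ s.filter P := by rw [hs]; simp
    exact Finset.mem_filter.mp this
  · have : b ∈ s.filter P := by rw [hs]; simp
    exact Finset.mem_filter.mp this
  · intro c hc hPc
    have : c ∈ s.filter P := Finset.mem_filter.mpr ⟨hc, hPc⟩
    rw [hs, Finset.mem_insert, Finset.mem_singleton] at this
    exact this

/-- Classification of a non-root vertex. -/
lemma vert_cases (N : Network) {v : ℕ} (hv : v ∈ N.verts) (hne : v ≠ N.root) :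
    IsTreeVert N v ∨ IsRet N v ∨ IsLeaf N v := by
  rcases N.nonroot_deg v hv hne with ⟨h1, h2⟩ | ⟨h1, h2⟩ | ⟨h1, h2⟩
  · exact Or.inl ⟨hv, h1, h2⟩
  · exact Or.inr (Or.inl ⟨hv, h1⟩)
  · exact Or.inr (Or.inr ⟨hv, h1, h2⟩)

lemma ret_ne_root (N : Network) {v : ℕ} (hv : IsRet N v) : v ≠ N.root := by
  rintro rfl
  have := hv.2
  rw [inDeg, N.root_indeg] at this
  exact absurd this (by omega)

lemma ret_not_leaf (N : Network) {v : ℕ} (hv : IsRet N v) : ¬ IsLeaf N v := by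
  intro hl
  have := hv.2
  rw [hl.2.1] at this
  exact absurd this (by omega)

lemma ret_outdeg (N : Network) {v : ℕ} (hv : IsRet N v) : outDeg N v = 1 := by
  rcases N.nonroot_deg v hv.1 (ret_ne_root N hv) with ⟨h1, h2⟩ | ⟨h1, h2⟩ | ⟨h1, h2⟩
  · have h1' : inDeg N v = 1 := h1
    have := hv.2; omega
  · exact h2
  · have h1' : inDeg N v = 1 := h1
    have := hv.2; omega

lemma ret_internal (N : Network) {v : ℕ} (hv : IsRet N v) : IsInternal N v :=
  ⟨hv.1, ret_ne_root N hv, ret_not_leaf N hv⟩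

lemma tree_ne_root (N : Network) {v : ℕ} (hv : IsTreeVert N v) : v ≠ N.root := by
  rintro rfl
  have := hv.2.1
  rw [inDeg, N.root_indeg] at this
  exact absurd this (by omega)

lemma tree_internal (N : Network) {v : ℕ} (hv : IsTreeVert N v) : IsInternal N v := by
  refine ⟨hv.1, tree_ne_root N hv, ?_⟩
  intro hl
  have := hv.2.2
  have := hl.2.2
  omega

/-- A non-leaf vertex has an out-arc. -/
lemma not_leaf_has_child (N : Network) {v : ℕ} (hv : v ∈ N.verts) (h : ¬ IsLeaf N v) :
    ∃ w, N.arc v w = true := by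
  by_cases hr : v = N.root
  · subst hr
    obtain ⟨c, hc, _⟩ := card_one_unique N.root_outdeg
    exact ⟨c, hc.2⟩
  · rcases N.nonroot_deg v hv hr with ⟨h1, h2⟩ | ⟨h1, h2⟩ | ⟨h1, h2⟩
    · obtain ⟨a, b, _, hA, _, _⟩ := card_two_pair h2
      exact ⟨a, hA.2⟩
    · obtain ⟨c, hc, _⟩ := card_one_unique h2
      exact ⟨c, hc.2⟩
    · exact absurd ⟨hv, h1, h2⟩ h

/-- Tail of an arc is not a leaf. -/
lemma tail_not_leaf (N : Network) {u v : ℕ} (h : N.arc u v = true) : ¬ IsLeaf N u :=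
  fun hl => leaf_no_out N hl h
/-! ### Leaf addition construction -/

def addArc (N : Network) (u r w x : ℕ) : ℕ → ℕ → Bool :=
  fun a b => (N.arc a b && !(decide (a = u) && decide (b = r)))
    || (decide (a = u) && decide (b = w)) || (decide (a = w) && decide (b = r))
    || (decide (a = w) && decide (b = x))

lemma addArc_iff (N : Network) (u r w x a b : ℕ) :
    addArc N u r w x a b = true ↔
      ((N.arc a b = true ∧ ¬ (a = u ∧ b = r)) ∨ (a = u ∧ b = w) ∨
        (a = w ∧ b = r) ∨ (a = w ∧ b = x)) := by
  simp [addArc, Bool.or_eq_true, Bool.and_eq_true, decide_eq_true_iff,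
    Bool.not_eq_true', Bool.and_eq_false_iff, decide_eq_false_iff_not]
  tauto

section AddLeaf

variable {N : Network} {u r w x : ℕ}
variable (hur : N.arc u r = true) (hw : w ∉ N.verts) (hx : x ∉ N.verts) (hwx : w ≠ x)

include hur hw hx hwx

lemma addLeaf_acyclic :
    ∀ v : ℕ, ¬ Relation.TransGen (fun a b : ℕ => addArc N u r w x a b = true) v v := by
  classical
  have hu : u ∈ N.verts := (N.arc_mem u r hur).1
  have hr : r ∈ N.verts := (N.arc_mem u r hur).2
  have huw : u ≠ w := fun h => hw (h ▸ hu)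
  have hux : u ≠ x := fun h => hx (h ▸ hu)
  have hrw : r ≠ w := fun h => hw (h ▸ hr)
  have hrx : r ≠ x := fun h => hx (h ▸ hr)
  set R : ℕ → ℕ → Prop := fun a b => N.arc a b = true with hR
  set C : ℕ → ℕ → Prop := fun a b =>
    if a = x then False
    else if a = w then
      (if b = x then True else if b = w then Relation.ReflTransGen R r u
        else Relation.ReflTransGen R r b)
    else
      (if b = w ∨ b = x then Relation.ReflTransGen R a u else Relation.TransGen R a b)
    with hC
  have simps : True := trivial
  have key : ∀ a b, Relation.TransGen (fun a b : ℕ => addArc N u r w x a b = true) a b →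
      C a b := by
    intro a b h
    induction h with
    | @single b hstep =>
      rw [addArc_iff] at hstep
      rcases hstep with ⟨hab, hne⟩ | ⟨hau, hbw⟩ | ⟨haw, hbr⟩ | ⟨haw, hbx⟩
      · have ha := (N.arc_mem _ _ hab).1
        have hb := (N.arc_mem _ _ hab).2
        have hax : a ≠ x := fun h => hx (h ▸ ha)
        have haw : a ≠ w := fun h => hw (h ▸ ha)
        have hbx : b ≠ x := fun h => hx (h ▸ hb)
        have hbw : b ≠ w := fun h => hw (h ▸ hb)
        simp only [hC, hax, haw, hbx, hbw, if_false, or_self, ite_false, ite_true,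
          eq_self_iff_true, or_false, false_or]
        exact Relation.TransGen.single hab
      · rw [hau, hbw]
        simp only [hC, hux, huw, hwx, if_false, ite_false, ite_true,
          eq_self_iff_true, true_or, if_true]
        exact Relation.ReflTransGen.refl
      · rw [haw, hbr]
        simp only [hC, hwx, hrx, hrw, if_false, ite_false, ite_true,
          eq_self_iff_true, if_true]
        exact Relation.ReflTransGen.refl
      · rw [haw, hbx]
        simp only [hC, hwx, if_false, ite_false, ite_true, eq_self_iff_true, if_true]
    | @tail b c hab hstep ih =>
      rw [addArc_iff] at hstep
      by_cases hax : a = x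
      · simp only [hC, if_pos hax] at ih
      by_cases haw : a = w
      all_goals
        rcases hstep with ⟨hbc, hne⟩ | ⟨hbu, hcw⟩ | ⟨hbw, hcr⟩ | ⟨hbw, hcx⟩
      -- a = w cases
      · have hb := (N.arc_mem _ _ hbc).1
        have hc := (N.arc_mem _ _ hbc).2
        have hbx : b ≠ x := fun h => hx (h ▸ hb)
        have hbw : b ≠ w := fun h => hw (h ▸ hb)
        have hcx : c ≠ x := fun h => hx (h ▸ hc)
        have hcw : c ≠ w := fun h => hw (h ▸ hc)
        rw [haw] at ih ⊢
        simp only [hC, hwx, hbx, hbw, hcx, hcw, if_false, ite_false, ite_true,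
          eq_self_iff_true, if_true] at ih ⊢
        exact ih.tail hbc
      · rw [hbu] at ih
        rw [haw] at ih ⊢
        rw [hcw]
        simp only [hC, hwx, hux, huw, if_false, ite_false, ite_true,
          eq_self_iff_true, if_true] at ih ⊢
        exact ih
      · rw [haw, hcr]
        simp only [hC, hwx, hrx, hrw, if_false, ite_false, ite_true,
          eq_self_iff_true, if_true]
        exact Relation.ReflTransGen.refl
      · rw [haw, hcx]
        simp only [hC, hwx, if_false, ite_false, ite_true, eq_self_iff_true, if_true]
      -- a ≠ w, a ≠ x cases
      · have hb := (N.arc_mem _ _ hbc).1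
        have hc := (N.arc_mem _ _ hbc).2
        have hbx : b ≠ x := fun h => hx (h ▸ hb)
        have hbw : b ≠ w := fun h => hw (h ▸ hb)
        have hcx : c ≠ x := fun h => hx (h ▸ hc)
        have hcw : c ≠ w := fun h => hw (h ▸ hc)
        simp only [hC, hax, haw, hbx, hbw, hcx, hcw, if_false, or_self, ite_false,
          ite_true, eq_self_iff_true, or_false, false_or] at ih ⊢
        exact ih.tail hbc
      · rw [hbu] at ih
        rw [hcw]
        simp only [hC, hax, haw, hux, huw, if_false, or_self, ite_false, ite_true,
          eq_self_iff_true, or_false, false_or, true_or, if_true] at ih ⊢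
        exact ih.to_reflTransGen
      · rw [hbw] at ih
        rw [hcr]
        simp only [hC, hax, haw, hrx, hrw, if_false, or_self, ite_false, ite_true,
          eq_self_iff_true, or_false, false_or, true_or, if_true] at ih ⊢
        exact Relation.TransGen.tail' ih hur
      · rw [hbw] at ih
        rw [hcx]
        simp only [hC, hax, haw, if_false, or_self, ite_false, ite_true,
          eq_self_iff_true, or_false, false_or, true_or, or_true, if_true] at ih ⊢
        exact ih
  intro v hv
  have hCvv := key v v hv
  by_cases hvx : v = x
  · simp only [hC, if_pos hvx] at hCvv
  by_cases hvw : v = w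
  · rw [hvw] at hCvv
    simp only [hC, hwx, if_false, ite_false, ite_true, eq_self_iff_true, if_true]
      at hCvv
    exact N.acyclic u (Relation.TransGen.head' hur hCvv)
  · simp only [hC, hvx, hvw, if_false, or_self, ite_false, ite_true,
      eq_self_iff_true, or_false, false_or] at hCvv
    exact N.acyclic v hCvv

end AddLeaf
section AddLeaf2

variable {N : Network} {u r w x : ℕ}
variable (hur : N.arc u r = true) (hw : w ∉ N.verts) (hx : x ∉ N.verts) (hwx : w ≠ x)

include hur hw hx hwx

lemma addLeaf_filter_head {v : ℕ} (hv : v ∈ N.verts) (hvr : v ≠ r) :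
    ((insert w (insert x N.verts)).filter fun a => addArc N u r w x a v = true)
      = N.verts.filter fun a => N.arc a v = true := by
  have hvw : v ≠ w := fun h => hw (h ▸ hv)
  have hvx : v ≠ x := fun h => hx (h ▸ hv)
  ext a
  simp only [Finset.mem_filter, Finset.mem_insert, addArc_iff]
  constructor
  · rintro ⟨hmem, h⟩
    rcases h with ⟨h1, _⟩ | ⟨_, h2⟩ | ⟨_, h2⟩ | ⟨_, h2⟩
    · exact ⟨(N.arc_mem _ _ h1).1, h1⟩
    · exact absurd h2 hvw
    · exact absurd h2 hvr
    · exact absurd h2 hvx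
  · rintro ⟨ha, harc⟩
    exact ⟨Or.inr (Or.inr ha), Or.inl ⟨harc, fun hc => hvr hc.2⟩⟩

lemma addLeaf_filter_head_r :
    ((insert w (insert x N.verts)).filter fun a => addArc N u r w x a r = true)
      = insert w ((N.verts.filter fun a => N.arc a r = true).erase u) := by
  have hr : r ∈ N.verts := (N.arc_mem u r hur).2
  have hrw : r ≠ w := fun h => hw (h ▸ hr)
  have hrx : r ≠ x := fun h => hx (h ▸ hr)
  ext a
  constructor
  · intro hmem
    obtain ⟨hV, harc⟩ := Finset.mem_filter.mp hmem
    rw [addArc_iff] at harc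
    rcases harc with ⟨h1, h2⟩ | ⟨_, h2⟩ | ⟨h1, _⟩ | ⟨_, h2⟩
    · exact Finset.mem_insert.mpr (Or.inr (Finset.mem_erase.mpr
        ⟨fun hau => h2 ⟨hau, rfl⟩, Finset.mem_filter.mpr ⟨(N.arc_mem _ _ h1).1, h1⟩⟩))
    · exact absurd h2 hrw
    · exact Finset.mem_insert.mpr (Or.inl h1)
    · exact absurd h2 hrx
  · intro hmem
    rcases Finset.mem_insert.mp hmem with rfl | hmem'
    · refine Finset.mem_filter.mpr ⟨Finset.mem_insert.mpr (Or.inl rfl), ?_⟩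
      rw [addArc_iff]
      exact Or.inr (Or.inr (Or.inl ⟨rfl, rfl⟩))
    · obtain ⟨hau, hmem''⟩ := Finset.mem_erase.mp hmem'
      obtain ⟨ha, harc⟩ := Finset.mem_filter.mp hmem''
      refine Finset.mem_filter.mpr
        ⟨Finset.mem_insert.mpr (Or.inr (Finset.mem_insert.mpr (Or.inr ha))), ?_⟩
      rw [addArc_iff]
      exact Or.inl ⟨harc, fun hc => hau hc.1⟩

lemma addLeaf_filter_head_w :
    ((insert w (insert x N.verts)).filter fun a => addArc N u r w x a w = true)
      = {u} := by
  have hu : u ∈ N.verts := (N.arc_mem u r hur).1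
  have hr : r ∈ N.verts := (N.arc_mem u r hur).2
  have hrw : r ≠ w := fun h => hw (h ▸ hr)
  ext a
  constructor
  · intro hmem
    obtain ⟨hV, harc⟩ := Finset.mem_filter.mp hmem
    rw [addArc_iff] at harc
    rcases harc with ⟨h1, _⟩ | ⟨h1, _⟩ | ⟨_, h2⟩ | ⟨_, h2⟩
    · exact absurd (N.arc_mem _ _ h1).2 hw
    · exact Finset.mem_singleton.mpr h1
    · exact absurd h2 hrw.symm
    · exact absurd h2 hwx
  · intro hmem
    rw [Finset.mem_singleton] at hmem
    subst hmem
    refine Finset.mem_filter.mpr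
      ⟨Finset.mem_insert.mpr (Or.inr (Finset.mem_insert.mpr (Or.inr hu))), ?_⟩
    rw [addArc_iff]
    exact Or.inr (Or.inl ⟨rfl, rfl⟩)

lemma addLeaf_filter_head_x :
    ((insert w (insert x N.verts)).filter fun a => addArc N u r w x a x = true)
      = {w} := by
  have hu : u ∈ N.verts := (N.arc_mem u r hur).1
  have hr : r ∈ N.verts := (N.arc_mem u r hur).2
  have hux : u ≠ x := fun h => hx (h ▸ hu)
  have hrx : r ≠ x := fun h => hx (h ▸ hr)
  ext a
  constructor
  · intro hmem
    obtain ⟨hV, harc⟩ := Finset.mem_filter.mp hmem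
    rw [addArc_iff] at harc
    rcases harc with ⟨h1, _⟩ | ⟨_, h2⟩ | ⟨_, h2⟩ | ⟨h1, _⟩
    · exact absurd (N.arc_mem _ _ h1).2 hx
    · exact absurd h2 hwx.symm
    · exact absurd h2 hrx.symm
    · exact Finset.mem_singleton.mpr h1
  · intro hmem
    rw [Finset.mem_singleton] at hmem
    subst hmem
    refine Finset.mem_filter.mpr ⟨Finset.mem_insert.mpr (Or.inl rfl), ?_⟩
    rw [addArc_iff]
    exact Or.inr (Or.inr (Or.inr ⟨rfl, rfl⟩))

lemma addLeaf_filter_tail {v : ℕ} (hv : v ∈ N.verts) (hvu : v ≠ u) :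
    ((insert w (insert x N.verts)).filter fun b => addArc N u r w x v b = true)
      = N.verts.filter fun b => N.arc v b = true := by
  have hvw : v ≠ w := fun h => hw (h ▸ hv)
  ext b
  constructor
  · intro hmem
    obtain ⟨hV, harc⟩ := Finset.mem_filter.mp hmem
    rw [addArc_iff] at harc
    rcases harc with ⟨h1, _⟩ | ⟨h2, _⟩ | ⟨h2, _⟩ | ⟨h2, _⟩
    · exact Finset.mem_filter.mpr ⟨(N.arc_mem _ _ h1).2, h1⟩
    · exact absurd h2 hvu
    · exact absurd h2 hvw
    · exact absurd h2 hvw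
  · intro hmem
    obtain ⟨hb, harc⟩ := Finset.mem_filter.mp hmem
    refine Finset.mem_filter.mpr
      ⟨Finset.mem_insert.mpr (Or.inr (Finset.mem_insert.mpr (Or.inr hb))), ?_⟩
    rw [addArc_iff]
    exact Or.inl ⟨harc, fun hc => hvu hc.1⟩

lemma addLeaf_filter_tail_u :
    ((insert w (insert x N.verts)).filter fun b => addArc N u r w x u b = true)
      = insert w ((N.verts.filter fun b => N.arc u b = true).erase r) := by
  have hu : u ∈ N.verts := (N.arc_mem u r hur).1
  have huw : u ≠ w := fun h => hw (h ▸ hu)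
  ext b
  constructor
  · intro hmem
    obtain ⟨hV, harc⟩ := Finset.mem_filter.mp hmem
    rw [addArc_iff] at harc
    rcases harc with ⟨h1, h2⟩ | ⟨_, h2⟩ | ⟨h2, _⟩ | ⟨h2, _⟩
    · exact Finset.mem_insert.mpr (Or.inr (Finset.mem_erase.mpr
        ⟨fun hbr => h2 ⟨rfl, hbr⟩, Finset.mem_filter.mpr ⟨(N.arc_mem _ _ h1).2, h1⟩⟩))
    · exact Finset.mem_insert.mpr (Or.inl h2)
    · exact absurd h2 huw
    · exact absurd h2 huw
  · intro hmem
    rcases Finset.mem_insert.mp hmem with rfl | hmem'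
    · refine Finset.mem_filter.mpr ⟨Finset.mem_insert.mpr (Or.inl rfl), ?_⟩
      rw [addArc_iff]
      exact Or.inr (Or.inl ⟨rfl, rfl⟩)
    · obtain ⟨hbr, hmem''⟩ := Finset.mem_erase.mp hmem'
      obtain ⟨hb, harc⟩ := Finset.mem_filter.mp hmem''
      refine Finset.mem_filter.mpr
        ⟨Finset.mem_insert.mpr (Or.inr (Finset.mem_insert.mpr (Or.inr hb))), ?_⟩
      rw [addArc_iff]
      exact Or.inl ⟨harc, fun hc => hbr hc.2⟩

lemma addLeaf_filter_tail_w :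
    ((insert w (insert x N.verts)).filter fun b => addArc N u r w x w b = true)
      = {r, x} := by
  have hu : u ∈ N.verts := (N.arc_mem u r hur).1
  have hr : r ∈ N.verts := (N.arc_mem u r hur).2
  have huw : u ≠ w := fun h => hw (h ▸ hu)
  ext b
  constructor
  · intro hmem
    obtain ⟨hV, harc⟩ := Finset.mem_filter.mp hmem
    rw [addArc_iff] at harc
    rcases harc with ⟨h1, _⟩ | ⟨h2, _⟩ | ⟨_, h2⟩ | ⟨_, h2⟩
    · exact absurd (N.arc_mem _ _ h1).1 hw
    · exact absurd h2 huw.symm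
    · exact Finset.mem_insert.mpr (Or.inl h2)
    · exact Finset.mem_insert.mpr (Or.inr (Finset.mem_singleton.mpr h2))
  · intro hmem
    rcases Finset.mem_insert.mp hmem with rfl | hmem'
    · refine Finset.mem_filter.mpr
        ⟨Finset.mem_insert.mpr (Or.inr (Finset.mem_insert.mpr (Or.inr hr))), ?_⟩
      rw [addArc_iff]
      exact Or.inr (Or.inr (Or.inl ⟨rfl, rfl⟩))
    · rw [Finset.mem_singleton] at hmem'
      subst hmem'
      refine Finset.mem_filter.mpr
        ⟨Finset.mem_insert.mpr (Or.inr (Finset.mem_insert.mpr (Or.inl rfl))), ?_⟩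
      rw [addArc_iff]
      exact Or.inr (Or.inr (Or.inr ⟨rfl, rfl⟩))

lemma addLeaf_filter_tail_x :
    ((insert w (insert x N.verts)).filter fun b => addArc N u r w x x b = true)
      = ∅ := by
  have hu : u ∈ N.verts := (N.arc_mem u r hur).1
  have hux : u ≠ x := fun h => hx (h ▸ hu)
  rw [Finset.eq_empty_iff_forall_notMem]
  intro b hmem
  obtain ⟨hV, harc⟩ := Finset.mem_filter.mp hmem
  rw [addArc_iff] at harc
  rcases harc with ⟨h1, _⟩ | ⟨h2, _⟩ | ⟨h2, _⟩ | ⟨h2, _⟩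
  · exact absurd (N.arc_mem _ _ h1).1 hx
  · exact absurd h2.symm hux
  · exact absurd h2.symm hwx
  · exact absurd h2.symm hwx

lemma addLeaf_indeg_card {v : ℕ} (hv : v ∈ N.verts) :
    ((insert w (insert x N.verts)).filter fun a => addArc N u r w x a v = true).card
      = (N.verts.filter fun a => N.arc a v = true).card := by
  by_cases hvr : v = r
  · rw [hvr, addLeaf_filter_head_r hur hw hx hwx]
    have hu : u ∈ N.verts := (N.arc_mem u r hur).1
    have humem : u ∈ N.verts.filter fun a => N.arc a r = true :=
      Finset.mem_filter.mpr ⟨hu, hur⟩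
    have hwmem : w ∉ (N.verts.filter fun a => N.arc a r = true).erase u := by
      intro hmem
      exact hw (Finset.mem_filter.mp (Finset.mem_of_mem_erase hmem)).1
    rw [Finset.card_insert_of_notMem hwmem, Finset.card_erase_of_mem humem]
    have : 1 ≤ (N.verts.filter fun a => N.arc a r = true).card :=
      Finset.card_pos.mpr ⟨u, humem⟩
    omega
  · rw [addLeaf_filter_head hur hw hx hwx hv hvr]

lemma addLeaf_outdeg_card {v : ℕ} (hv : v ∈ N.verts) :
    ((insert w (insert x N.verts)).filter fun b => addArc N u r w x v b = true).card
      = (N.verts.filter fun b => N.arc v b = true).card := by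
  by_cases hvu : v = u
  · rw [hvu, addLeaf_filter_tail_u hur hw hx hwx]
    have hr : r ∈ N.verts := (N.arc_mem u r hur).2
    have hrmem : r ∈ N.verts.filter fun b => N.arc u b = true :=
      Finset.mem_filter.mpr ⟨hr, hur⟩
    have hwmem : w ∉ (N.verts.filter fun b => N.arc u b = true).erase r := by
      intro hmem
      exact hw (Finset.mem_filter.mp (Finset.mem_of_mem_erase hmem)).1
    rw [Finset.card_insert_of_notMem hwmem, Finset.card_erase_of_mem hrmem]
    have : 1 ≤ (N.verts.filter fun b => N.arc u b = true).card :=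
      Finset.card_pos.mpr ⟨r, hrmem⟩
    omega
  · rw [addLeaf_filter_tail hur hw hx hwx hv hvu]

/-- The leaf addition network. -/
def addLeaf : Network where
  verts := insert w (insert x N.verts)
  arc := addArc N u r w x
  root := N.root
  root_mem := by simp [N.root_mem]
  arc_mem := by
    intro a b h
    rw [addArc_iff] at h
    have hu : u ∈ N.verts := (N.arc_mem u r hur).1
    have hr : r ∈ N.verts := (N.arc_mem u r hur).2
    rcases h with ⟨h1, _⟩ | ⟨rfl, rfl⟩ | ⟨rfl, rfl⟩ | ⟨rfl, rfl⟩
    · exact ⟨by simp [(N.arc_mem _ _ h1).1], by simp [(N.arc_mem _ _ h1).2]⟩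
    · exact ⟨by simp [hu], by simp⟩
    · exact ⟨by simp, by simp [hr]⟩
    · exact ⟨by simp, by simp⟩
  acyclic := addLeaf_acyclic hur hw hx hwx
  root_indeg := by
    have hrr : N.root ≠ r := fun h => head_ne_root N hur h.symm
    rw [addLeaf_filter_head hur hw hx hwx N.root_mem hrr]
    exact N.root_indeg
  root_outdeg := by
    rw [addLeaf_outdeg_card hur hw hx hwx N.root_mem]
    exact N.root_outdeg
  nonroot_deg := by
    intro v hv hvroot
    have hu : u ∈ N.verts := (N.arc_mem u r hur).1
    have hr : r ∈ N.verts := (N.arc_mem u r hur).2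
    have hrx : r ≠ x := fun h => hx (h ▸ hr)
    rw [Finset.mem_insert, Finset.mem_insert] at hv
    rcases hv with rfl | rfl | hv
    · left
      constructor
      · rw [addLeaf_filter_head_w hur hw hx hwx]; simp
      · rw [addLeaf_filter_tail_w hur hw hx hwx]
        rw [Finset.card_insert_of_notMem (by simp [hrx]), Finset.card_singleton]
    · right; right
      constructor
      · rw [addLeaf_filter_head_x hur hw hx hwx]; simp
      · rw [addLeaf_filter_tail_x hur hw hx hwx]; simp
    · rw [addLeaf_indeg_card hur hw hx hwx hv, addLeaf_outdeg_card hur hw hx hwx hv]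
      exact N.nonroot_deg v hv hvroot

lemma addLeaf_isLeafAdditionOn :
    IsLeafAdditionOn N (addLeaf hur hw hx hwx) u r := by
  refine ⟨hur, w, x, hw, hx, hwx, rfl, rfl, ?_⟩
  intro a b
  exact addArc_iff N u r w x a b

end AddLeaf2
def addLabel (t : ℕ → ℝ) (r w x : ℕ) : ℕ → ℝ :=
  fun v => if v = w then t r else if v = x then t r + 1 else t v

section AddLabel

variable {N : Network} {u r w x : ℕ} {t : ℕ → ℝ}
variable (hur : N.arc u r = true) (hw : w ∉ N.verts) (hx : x ∉ N.verts) (hwx : w ≠ x)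

lemma addLabel_old {v : ℕ} (hvw : v ≠ w) (hvx : v ≠ x) : addLabel t r w x v = t v := by
  simp [addLabel, hvw, hvx]

lemma addLabel_w : addLabel t r w x w = t r := by simp [addLabel]

include hwx in
lemma addLabel_x : addLabel t r w x x = t r + 1 := by
  simp [addLabel, hwx.symm]

include hur hw hx hwx

lemma addLabel_old' {v : ℕ} (hv : v ∈ N.verts) : addLabel t r w x v = t v :=
  addLabel_old (fun h => hw (h ▸ hv)) (fun h => hx (h ▸ hv))

lemma addLeaf_ret_iff {v : ℕ} (hv : v ∈ N.verts) :
    IsRet (addLeaf hur hw hx hwx) v ↔ IsRet N v := by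
  have hdeg : inDeg (addLeaf hur hw hx hwx) v = inDeg N v :=
    addLeaf_indeg_card hur hw hx hwx hv
  constructor
  · rintro ⟨_, h2⟩; exact ⟨hv, by rw [← hdeg]; exact h2⟩
  · rintro ⟨_, h2⟩
    exact ⟨by simp [addLeaf, hv], by rw [hdeg]; exact h2⟩

lemma addLeaf_not_ret_w : ¬ IsRet (addLeaf hur hw hx hwx) w := by
  rintro ⟨_, h2⟩
  have : inDeg (addLeaf hur hw hx hwx) w = 1 := by
    show ((insert w (insert x N.verts)).filter
      fun a => addArc N u r w x a w = true).card = 1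
    rw [addLeaf_filter_head_w hur hw hx hwx]; simp
  omega

lemma addLeaf_not_ret_x : ¬ IsRet (addLeaf hur hw hx hwx) x := by
  rintro ⟨_, h2⟩
  have : inDeg (addLeaf hur hw hx hwx) x = 1 := by
    show ((insert w (insert x N.verts)).filter
      fun a => addArc N u r w x a x = true).card = 1
    rw [addLeaf_filter_head_x hur hw hx hwx]; simp
  omega

lemma addLeaf_leaf_iff {v : ℕ} (hv : v ∈ N.verts) :
    IsLeaf (addLeaf hur hw hx hwx) v ↔ IsLeaf N v := by
  have hdeg : inDeg (addLeaf hur hw hx hwx) v = inDeg N v :=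
    addLeaf_indeg_card hur hw hx hwx hv
  have hdeg2 : outDeg (addLeaf hur hw hx hwx) v = outDeg N v :=
    addLeaf_outdeg_card hur hw hx hwx hv
  constructor
  · rintro ⟨_, h2, h3⟩; exact ⟨hv, by omega, by omega⟩
  · rintro ⟨_, h2, h3⟩
    exact ⟨by simp [addLeaf, hv], by omega, by omega⟩

lemma addLeaf_nonTemporal (ht : IsNonTemporal N t) (hin : Inret N t r) :
    IsNonTemporal (addLeaf hur hw hx hwx) (addLabel t r w x) := by
  have hu : u ∈ N.verts := (N.arc_mem u r hur).1
  have hr : r ∈ N.verts := (N.arc_mem u r hur).2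
  have htur : t u < t r := lt_of_le_of_ne (ht.1 u r hur) (hin.2 u hur)
  set A := addLeaf hur hw hx hwx with hA
  set s := addLabel t r w x with hs
  have harcA : ∀ a b : ℕ, A.arc a b = true ↔
      ((N.arc a b = true ∧ ¬ (a = u ∧ b = r)) ∨ (a = u ∧ b = w) ∨
        (a = w ∧ b = r) ∨ (a = w ∧ b = x)) := fun a b => addArc_iff N u r w x a b
  have hsold : ∀ v ∈ N.verts, s v = t v := fun v hv => addLabel_old' hur hw hx hwx hv
  refine ⟨?_, ?_, ?_, ?_⟩
  · -- monotone
    intro a b hab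
    rw [harcA] at hab
    rcases hab with ⟨h1, _⟩ | ⟨hau, hbw⟩ | ⟨haw, hbr⟩ | ⟨haw, hbx⟩
    · rw [hsold _ (N.arc_mem _ _ h1).1, hsold _ (N.arc_mem _ _ h1).2]
      exact ht.1 _ _ h1
    · rw [hau, hbw, hsold _ hu, hs, addLabel_w]; exact le_of_lt htur
    · rw [haw, hbr, hsold _ hr, hs, addLabel_w]
    · rw [haw, hbx, hs, addLabel_w, addLabel_x hwx]; linarith
  · -- horizontal implies reticulation
    intro a b hab heq
    rw [harcA] at hab
    rcases hab with ⟨h1, _⟩ | ⟨hau, hbw⟩ | ⟨haw, hbr⟩ | ⟨haw, hbx⟩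
    · rw [hsold _ (N.arc_mem _ _ h1).1, hsold _ (N.arc_mem _ _ h1).2] at heq
      exact (addLeaf_ret_iff hur hw hx hwx (N.arc_mem _ _ h1).2).mpr (ht.2.1 _ _ h1 heq)
    · rw [hau, hbw, hsold _ hu, hs, addLabel_w] at heq
      exact absurd heq (hin.2 u hur)
    · rw [hbr]
      exact (addLeaf_ret_iff hur hw hx hwx hr).mpr hin.1
    · rw [haw, hbx, hs, addLabel_w, addLabel_x hwx] at heq; linarith
  · -- internal has strictly later child
    intro v hint
    obtain ⟨hvA, hvroot, hvleaf⟩ := hint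
    rw [show A.verts = insert w (insert x N.verts) from rfl, Finset.mem_insert,
      Finset.mem_insert] at hvA
    rcases hvA with hvw | hvx | hv
    · -- v = w : child x
      obtain rfl := hvw.symm
      refine ⟨x, ?_, ?_⟩
      · rw [harcA]; exact Or.inr (Or.inr (Or.inr ⟨rfl, rfl⟩))
      · rw [hs, addLabel_w, addLabel_x hwx]; linarith
    · -- v = x : x is a leaf in A, contradiction
      obtain rfl := hvx.symm
      exfalso
      apply hvleaf
      refine ⟨Finset.mem_insert.mpr (Or.inr (Finset.mem_insert.mpr (Or.inl rfl))), ?_, ?_⟩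
      · show ((insert w (insert x N.verts)).filter
          fun a => addArc N u r w x a x = true).card = 1
        rw [addLeaf_filter_head_x hur hw hx hwx]; simp
      · show ((insert w (insert x N.verts)).filter
          fun b => addArc N u r w x x b = true).card = 0
        rw [addLeaf_filter_tail_x hur hw hx hwx]; simp
    · -- old vertex
      by_cases hvu : v = u
      · subst hvu
        refine ⟨w, ?_, ?_⟩
        · rw [harcA]; exact Or.inr (Or.inl ⟨rfl, rfl⟩)
        · rw [hsold _ hu, hs, addLabel_w]; exact htur
      · have hint' : IsInternal N v := by
          refine ⟨hv, hvroot, fun hl => hvleaf ?_⟩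
          exact (addLeaf_leaf_iff hur hw hx hwx hv).mpr hl
        obtain ⟨c, hc, hlt⟩ := ht.2.2.1 v hint'
        refine ⟨c, ?_, ?_⟩
        · rw [harcA]; exact Or.inl ⟨hc, fun hcon => hvu hcon.1⟩
        · rw [hsold _ hv, hsold _ (N.arc_mem _ _ hc).2]; exact hlt
  · -- at most one horizontal parent
    intro v p q hret hp hq hpq hcon
    have hvA := hret.1
    rw [show A.verts = insert w (insert x N.verts) from rfl, Finset.mem_insert,
      Finset.mem_insert] at hvA
    rcases hvA with hvw | hvx | hv
    · obtain rfl := hvw.symm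
      exact addLeaf_not_ret_w hur hw hx hwx hret
    · obtain rfl := hvx.symm
      exact addLeaf_not_ret_x hur hw hx hwx hret
    · have hvret : IsRet N v := (addLeaf_ret_iff hur hw hx hwx hv).mp hret
      by_cases hvr : v = r
      · -- parents of r in A : w and old ones ≠ u
        subst hvr
        have hpar : ∀ p' : ℕ, A.arc p' v = true →
            (N.arc p' v = true ∧ p' ≠ u) ∨ p' = w := by
          intro p' h
          rw [harcA] at h
          rcases h with ⟨h1, h2⟩ | ⟨_, h2⟩ | ⟨h1, _⟩ | ⟨_, h2⟩
          · exact Or.inl ⟨h1, fun hpu => h2 ⟨hpu, rfl⟩⟩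
          · exact absurd h2 (fun hh => hw (hh ▸ hr))
          · exact Or.inr h1
          · exact absurd h2 (fun hh => hx (hh.symm ▸ hr) )
        have hlabv : s v = t v := hsold _ hv
        rcases hpar p hp with ⟨hp1, _⟩ | rfl
        · -- p is an old (vertical) parent
          have : s p = t p := hsold _ (N.arc_mem _ _ hp1).1
          rw [this, hlabv] at hcon
          exact hin.2 p hp1 hcon.1
        · rcases hpar q hq with ⟨hq1, _⟩ | rfl
          · have : s q = t q := hsold _ (N.arc_mem _ _ hq1).1
            rw [this, hlabv] at hcon
            exact hin.2 q hq1 hcon.2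
          · exact hpq rfl
      · -- parents of v in A are exactly the parents in N
        have hpar : ∀ p' : ℕ, A.arc p' v = true → N.arc p' v = true := by
          intro p' h
          rw [harcA] at h
          rcases h with ⟨h1, _⟩ | ⟨_, h2⟩ | ⟨_, h2⟩ | ⟨_, h2⟩
          · exact h1
          · exact absurd h2 (fun hh => hw (hh ▸ hv))
          · exact absurd h2.symm (Ne.symm hvr)
          · exact absurd h2 (fun hh => hx (hh ▸ hv))
        have hp1 := hpar p hp
        have hq1 := hpar q hq
        rw [hsold _ (N.arc_mem _ _ hp1).1, hsold _ (N.arc_mem _ _ hq1).1,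
          hsold _ hv] at hcon
        exact ht.2.2.2 v p q hvret hp1 hq1 hpq hcon

lemma addLeaf_inret_iff (ht : IsNonTemporal N t) (hin : Inret N t r) (v : ℕ) :
    Inret (addLeaf hur hw hx hwx) (addLabel t r w x) v ↔ (Inret N t v ∧ v ≠ r) := by
  have hu : u ∈ N.verts := (N.arc_mem u r hur).1
  have hr : r ∈ N.verts := (N.arc_mem u r hur).2
  set A := addLeaf hur hw hx hwx with hA
  set s := addLabel t r w x with hs
  have harcA : ∀ a b : ℕ, A.arc a b = true ↔
      ((N.arc a b = true ∧ ¬ (a = u ∧ b = r)) ∨ (a = u ∧ b = w) ∨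
        (a = w ∧ b = r) ∨ (a = w ∧ b = x)) := fun a b => addArc_iff N u r w x a b
  have hsold : ∀ v ∈ N.verts, s v = t v := fun v hv => addLabel_old' hur hw hx hwx hv
  constructor
  · rintro ⟨hret, hpar⟩
    have hvA := hret.1
    rw [show A.verts = insert w (insert x N.verts) from rfl, Finset.mem_insert,
      Finset.mem_insert] at hvA
    rcases hvA with hvw | hvx | hv
    · obtain rfl := hvw.symm
      exact absurd hret (addLeaf_not_ret_w hur hw hx hwx)
    · obtain rfl := hvx.symm
      exact absurd hret (addLeaf_not_ret_x hur hw hx hwx)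
    have hvr : v ≠ r := by
      intro hvr'
      have hwarc : A.arc w v = true := by
        rw [harcA]; exact Or.inr (Or.inr (Or.inl ⟨rfl, hvr'⟩))
      apply hpar w hwarc
      rw [hs, addLabel_w, addLabel_old' hur hw hx hwx hv, hvr']
    refine ⟨⟨(addLeaf_ret_iff hur hw hx hwx hv).mp hret, ?_⟩, hvr⟩
    intro p hp
    have hpA : A.arc p v = true := by
      rw [harcA]
      exact Or.inl ⟨hp, fun hc => hvr hc.2⟩
    have := hpar p hpA
    rwa [hsold _ (N.arc_mem _ _ hp).1, hsold _ hv] at this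
  · rintro ⟨⟨hret, hinp⟩, hvr⟩
    have hv := hret.1
    refine ⟨(addLeaf_ret_iff hur hw hx hwx hv).mpr hret, ?_⟩
    intro p hp
    rw [harcA] at hp
    rcases hp with ⟨h1, _⟩ | ⟨_, h2⟩ | ⟨_, h2⟩ | ⟨_, h2⟩
    · rw [hsold _ (N.arc_mem _ _ h1).1, hsold _ hv]
      exact hinp p h1
    · exact absurd h2 (fun hh => hw (hh ▸ hv))
    · exact absurd h2.symm (Ne.symm hvr)
    · exact absurd h2 (fun hh => hx (hh ▸ hv))

end AddLabel
lemma inret_subset (M : Network) (s : ℕ → ℝ) : {v : ℕ | Inret M s v} ⊆ ↑M.verts :=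
  fun v hv => hv.1.1

lemma inret_finite (M : Network) (s : ℕ → ℝ) : {v : ℕ | Inret M s v}.Finite :=
  Set.Finite.subset M.verts.finite_toSet (inret_subset M s)

lemma hgt_of_no_inrets (M : Network) (s : ℕ → ℝ) (hs : IsNonTemporal M s)
    (h : ∀ v, ¬ Inret M s v) : IsHGTConsistent M s := by
  refine ⟨hs, fun r hret => ?_⟩
  have hr := h r
  rw [Inret] at hr
  push_neg at hr
  obtain ⟨p, hp, hps⟩ := hr hret
  refine ⟨p, ⟨hp, hps⟩, ?_⟩
  intro q ⟨hq, hqs⟩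
  by_contra hne
  exact hs.2.2.2 r q p hret hq hp hne ⟨hqs, hps⟩

lemma fix_steps : ∀ (k : ℕ) (M0 : Network) (s : ℕ → ℝ),
    IsNonTemporal M0 s → inretCount M0 s = k →
    ∃ M : ℕ → Network, M 0 = M0 ∧ (∀ i, i < k → IsLeafAddition (M i) (M (i + 1))) ∧
      ∃ s' : ℕ → ℝ, IsHGTConsistent (M k) s' ∧ ∀ v ∈ M0.verts, s' v = s v := by
  intro k
  induction k with
  | zero =>
    intro M0 s hs hc
    refine ⟨fun _ => M0, rfl, fun i hi => absurd hi (Nat.not_lt_zero i), s, ?_,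
      fun v _ => rfl⟩
    apply hgt_of_no_inrets M0 s hs
    intro v hv
    have hfin := inret_finite M0 s
    rw [inretCount] at hc
    have hempty : {r : ℕ | Inret M0 s r} = ∅ := (Set.ncard_eq_zero hfin).mp hc
    exact absurd (show v ∈ {r : ℕ | Inret M0 s r} from hv)
      (by rw [hempty]; exact Set.notMem_empty v)
  | succ k ih =>
    intro M0 s hs hc
    have hfin := inret_finite M0 s
    have hne : {v : ℕ | Inret M0 s v}.Nonempty := by
      apply Set.nonempty_of_ncard_ne_zero
      rw [inretCount] at hc
      omega
    obtain ⟨r, hrin⟩ := hne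
    have hret : IsRet M0 r := hrin.1
    obtain ⟨u, hu, hur⟩ := exists_parent M0 hret.1 (ret_ne_root M0 hret)
    set w : ℕ := M0.verts.sup id + 1 with hwdef
    set x : ℕ := M0.verts.sup id + 2 with hxdef
    have hw : w ∉ M0.verts := by
      intro hmem
      have := Finset.le_sup (f := id) hmem
      simp only [id] at this
      omega
    have hx : x ∉ M0.verts := by
      intro hmem
      have := Finset.le_sup (f := id) hmem
      simp only [id] at this
      omega
    have hwx : w ≠ x := by omega
    set A := addLeaf hur hw hx hwx with hAdef
    set s1 := addLabel s r w x with hs1def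
    have hA_nt : IsNonTemporal A s1 := addLeaf_nonTemporal hur hw hx hwx hs hrin
    have hseteq : {v : ℕ | Inret A s1 v} = {v : ℕ | Inret M0 s v} \ {r} := by
      ext v
      rw [Set.mem_diff, Set.mem_singleton_iff]
      exact addLeaf_inret_iff hur hw hx hwx hs hrin v
    have hcount : inretCount A s1 = k := by
      rw [inretCount, hseteq, Set.ncard_diff_singleton_of_mem hrin]
      rw [inretCount] at hc
      omega
    obtain ⟨M', hM0, hsteps, s', hHGT, hext⟩ := ih A s1 hA_nt hcount
    refine ⟨fun i => match i with | 0 => M0 | Nat.succ n => M' n, rfl, ?_, s', ?_, ?_⟩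
    · intro i hi
      match i with
      | 0 =>
        show IsLeafAddition M0 (M' 0)
        rw [hM0]
        exact ⟨u, r, addLeaf_isLeafAdditionOn hur hw hx hwx⟩
      | Nat.succ n =>
        exact hsteps n (by omega)
    · exact hHGT
    · intro v hv
      have hvA : v ∈ A.verts := by
        show v ∈ insert w (insert x M0.verts)
        exact Finset.mem_insert.mpr (Or.inr (Finset.mem_insert.mpr (Or.inr hv)))
      rw [hext v hvA, hs1def, addLabel_old' hur hw hx hwx hv]
lemma card_two_complete {s : Finset ℕ} {P : ℕ → Prop} [DecidablePred P] {x y : ℕ}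
    (h : (s.filter P).card = 2) (hmx : x ∈ s) (hPx : P x) (hmy : y ∈ s) (hPy : P y)
    (hxy : x ≠ y) : ∀ c ∈ s, P c → c = x ∨ c = y := by
  obtain ⟨a, b, hab, hA, hB, hcomp⟩ := card_two_pair h
  intro c hc hPc
  rcases hcomp x hmx hPx with rfl | rfl
  · rcases hcomp y hmy hPy with rfl | rfl
    · exact absurd rfl hxy
    · rcases hcomp c hc hPc with rfl | rfl
      · exact Or.inl rfl
      · exact Or.inr rfl
  · rcases hcomp y hmy hPy with rfl | rfl
    · rcases hcomp c hc hPc with rfl | rfl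
      · exact Or.inr rfl
      · exact Or.inl rfl
    · exact absurd rfl hxy

lemma two_le_card_of_two_mem {s : Finset ℕ} {P : ℕ → Prop} [DecidablePred P] {x y : ℕ}
    (hmx : x ∈ s) (hPx : P x) (hmy : y ∈ s) (hPy : P y) (hxy : x ≠ y) :
    2 ≤ (s.filter P).card := by
  have hsub : ({x, y} : Finset ℕ) ⊆ s.filter P := by
    intro c hc
    rcases Finset.mem_insert.mp hc with rfl | hc'
    · exact Finset.mem_filter.mpr ⟨hmx, hPx⟩
    · rw [Finset.mem_singleton] at hc'
      subst hc'
      exact Finset.mem_filter.mpr ⟨hmy, hPy⟩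
  have := Finset.card_le_card hsub
  rwa [Finset.card_insert_of_notMem (by simp [hxy]), Finset.card_singleton] at this

lemma parent_unique {N : Network} {v p : ℕ} (h : inDeg N v = 1) (hp : N.arc p v = true) :
    ∀ a, N.arc a v = true → a = p := by
  obtain ⟨a0, _, huniq⟩ := card_one_unique h
  intro a ha
  rw [huniq a (N.arc_mem _ _ ha).1 ha, ← huniq p (N.arc_mem _ _ hp).1 hp]

lemma child_unique {N : Network} {v c : ℕ} (h : outDeg N v = 1) (hc : N.arc v c = true) :
    ∀ b, N.arc v b = true → b = c := by
  obtain ⟨c0, _, huniq⟩ := card_one_unique h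
  intro b hb
  rw [huniq b (N.arc_mem _ _ hb).2 hb, ← huniq c (N.arc_mem _ _ hc).2 hc]

/-- A vertex with two distinct children and a parent is a tree vertex. -/
lemma tree_of_two_children {N : Network} {p x y q : ℕ} (hpx : N.arc p x = true)
    (hpy : N.arc p y = true) (hxy : x ≠ y) (hqp : N.arc q p = true) :
    IsTreeVert N p := by
  have hp : p ∈ N.verts := (N.arc_mem _ _ hpx).1
  have hproot : p ≠ N.root := head_ne_root N hqp
  have hout : 2 ≤ outDeg N p :=
    two_le_card_of_two_mem (N.arc_mem _ _ hpx).2 hpx (N.arc_mem _ _ hpy).2 hpy hxy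
  rcases N.nonroot_deg p hp hproot with ⟨h1, h2⟩ | ⟨h1, h2⟩ | ⟨h1, h2⟩
  · exact ⟨hp, h1, h2⟩
  · exact absurd hout (by have h2' : outDeg N p = 1 := h2; omega)
  · exact absurd hout (by have h2' : outDeg N p = 0 := h2; omega)

lemma children_of_tree {N : Network} {p x y : ℕ} (hp : IsTreeVert N p)
    (hpx : N.arc p x = true) (hpy : N.arc p y = true) (hxy : x ≠ y) :
    ∀ c, N.arc p c = true → c = x ∨ c = y := by
  intro c hc
  exact card_two_complete hp.2.2 (N.arc_mem _ _ hpx).2 hpx (N.arc_mem _ _ hpy).2 hpy hxy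
    c (N.arc_mem _ _ hc).2 hc

lemma parents_of_ret {N : Network} {v a b : ℕ} (hv : IsRet N v)
    (ha : N.arc a v = true) (hb : N.arc b v = true) (hab : a ≠ b) :
    ∀ c, N.arc c v = true → c = a ∨ c = b := by
  intro c hc
  exact card_two_complete hv.2 (N.arc_mem _ _ ha).1 ha (N.arc_mem _ _ hb).1 hb hab
    c (N.arc_mem _ _ hc).1 hc

lemma leaf_parent_unique {N : Network} {x p : ℕ} (hx : IsLeaf N x)
    (hp : N.arc p x = true) : ∀ a, N.arc a x = true → a = p :=
  parent_unique hx.2.1 hp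

lemma two_le_verts_card (N : Network) : 2 ≤ N.verts.card := by
  obtain ⟨c, hc, _⟩ := card_one_unique N.root_outdeg
  have hcr : c ≠ N.root := fun h => arc_irrefl N N.root (h ▸ hc.2)
  have hsub : ({N.root, c} : Finset ℕ) ⊆ N.verts := by
    intro v hv
    rcases Finset.mem_insert.mp hv with rfl | hv'
    · exact N.root_mem
    · rw [Finset.mem_singleton] at hv'
      subst hv'
      exact hc.1
  have := Finset.card_le_card hsub
  rwa [Finset.card_insert_of_notMem (by simp [Ne.symm hcr]), Finset.card_singleton]
    at this

lemma singleLeaf_of_card_two (N : Network) (h : N.verts.card = 2) : IsSingleLeaf N := by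
  obtain ⟨c, hc, _⟩ := card_one_unique N.root_outdeg
  have hcr : c ≠ N.root := fun hh => arc_irrefl N N.root (hh ▸ hc.2)
  have hsub : ({N.root, c} : Finset ℕ) ⊆ N.verts := by
    intro v hv
    rcases Finset.mem_insert.mp hv with rfl | hv'
    · exact N.root_mem
    · rw [Finset.mem_singleton] at hv'
      subst hv'
      exact hc.1
  have hcard : ({N.root, c} : Finset ℕ).card = 2 := by
    rw [Finset.card_insert_of_notMem (by simp [Ne.symm hcr]), Finset.card_singleton]
  refine ⟨c, hcr, ?_⟩
  exact (Finset.eq_of_subset_of_card_le hsub (by omega)).symm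
/-! ### Cherry reduction -/

lemma transGen_no_succ {α : Type*} {R : α → α → Prop} {v : α} (h : ∀ c, ¬ R v c) :
    ¬ Relation.TransGen R v v := by
  intro hv
  obtain ⟨c, hc, -⟩ := (Relation.TransGen.head'_iff).mp hv
  exact h c hc

def cherryArc (N : Network) (p q x y : ℕ) : ℕ → ℕ → Bool := fun a b =>
  (N.arc a b && !decide (a = p) && !decide (b = p) && !decide (b = x))
    || (decide (a = q) && decide (b = y))

lemma cherryArc_iff (N : Network) (p q x y a b : ℕ) :
    cherryArc N p q x y a b = true ↔
      ((N.arc a b = true ∧ a ≠ p ∧ b ≠ p ∧ b ≠ x) ∨ (a = q ∧ b = y)) := by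
  simp [cherryArc, Bool.or_eq_true, Bool.and_eq_true, decide_eq_true_iff,
    Bool.not_eq_true', decide_eq_false_iff_not]
  tauto

section Cherry

variable {N : Network} {x y p q : ℕ}
variable (hx : IsLeaf N x) (hy : IsLeaf N y) (hxy : x ≠ y)
variable (hpx : N.arc p x = true) (hpy : N.arc p y = true) (hqp : N.arc q p = true)

include hx hy hxy hpx hpy hqp

lemma cherry_tree : IsTreeVert N p := tree_of_two_children hpx hpy hxy hqp

lemma cherry_children : ∀ c, N.arc p c = true → c = x ∨ c = y :=
  children_of_tree (cherry_tree hx hy hxy hpx hpy hqp) hpx hpy hxy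

lemma cherry_parent : ∀ a, N.arc a p = true → a = q :=
  parent_unique (cherry_tree hx hy hxy hpx hpy hqp).2.1 hqp

lemma cherry_qx : q ≠ x := fun h => leaf_no_out N hx (h ▸ hqp)

lemma cherry_qy : q ≠ y := fun h => leaf_no_out N hy (h ▸ hqp)

lemma cherry_acyclic :
    ∀ v : ℕ, ¬ Relation.TransGen (fun a b : ℕ => cherryArc N p q x y a b = true) v v := by
  have hqy := cherry_qy hx hy hxy hpx hpy hqp
  have key : ∀ a b, Relation.TransGen (fun a b : ℕ => cherryArc N p q x y a b = true) a b →
      Relation.TransGen (fun a b : ℕ => N.arc a b = true) a b ∨ b = y := by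
    intro a b h
    induction h with
    | @single b hstep =>
      rw [cherryArc_iff] at hstep
      rcases hstep with ⟨h1, _⟩ | ⟨_, rfl⟩
      · exact Or.inl (Relation.TransGen.single h1)
      · exact Or.inr rfl
    | @tail b c hab hstep ih =>
      rw [cherryArc_iff] at hstep
      rcases ih with ih | rfl
      · rcases hstep with ⟨h1, _⟩ | ⟨_, rfl⟩
        · exact Or.inl (ih.tail h1)
        · exact Or.inr rfl
      · rcases hstep with ⟨h1, _⟩ | ⟨hbq, rfl⟩
        · exact absurd h1 (fun hh => leaf_no_out N hy hh)
        · exact Or.inr rfl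
  intro v hv
  by_cases hvy : v = y
  · subst hvy
    refine transGen_no_succ ?_ hv
    intro c hc
    rw [cherryArc_iff] at hc
    rcases hc with ⟨h1, _⟩ | ⟨h1, _⟩
    · exact leaf_no_out N hy h1
    · exact hqy h1.symm
  · rcases key v v hv with hcyc | rfl
    · exact N.acyclic v hcyc
    · exact hvy rfl

lemma cherry_filter_head_y :
    (((N.verts.erase x).erase p).filter fun a => cherryArc N p q x y a y = true)
      = {q} := by
  have hq : q ∈ N.verts := (N.arc_mem _ _ hqp).1
  have hqx := cherry_qx hx hy hxy hpx hpy hqp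
  have hqp' : q ≠ p := arc_ne N hqp
  ext a
  constructor
  · intro hmem
    obtain ⟨hV, harc⟩ := Finset.mem_filter.mp hmem
    rw [cherryArc_iff] at harc
    rcases harc with ⟨h1, h2, _, _⟩ | ⟨h1, _⟩
    · have := leaf_parent_unique hy hpy a h1
      exact absurd this h2
    · exact Finset.mem_singleton.mpr h1
  · intro hmem
    rw [Finset.mem_singleton] at hmem
    subst hmem
    refine Finset.mem_filter.mpr ⟨?_, ?_⟩
    · exact Finset.mem_erase.mpr ⟨hqp', Finset.mem_erase.mpr ⟨hqx, hq⟩⟩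
    · rw [cherryArc_iff]; exact Or.inr ⟨rfl, rfl⟩

lemma cherry_filter_head {v : ℕ} (hvx : v ≠ x) (hvp : v ≠ p) (hvy : v ≠ y) :
    (((N.verts.erase x).erase p).filter fun a => cherryArc N p q x y a v = true)
      = N.verts.filter fun a => N.arc a v = true := by
  ext a
  constructor
  · intro hmem
    obtain ⟨hV, harc⟩ := Finset.mem_filter.mp hmem
    rw [cherryArc_iff] at harc
    rcases harc with ⟨h1, _, _, _⟩ | ⟨_, h2⟩
    · exact Finset.mem_filter.mpr ⟨(N.arc_mem _ _ h1).1, h1⟩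
    · exact absurd h2 hvy
  · intro hmem
    obtain ⟨ha, harc⟩ := Finset.mem_filter.mp hmem
    have hax : a ≠ x := fun hh => leaf_no_out N hx (hh ▸ harc)
    have hap : a ≠ p := by
      intro hh
      rcases cherry_children hx hy hxy hpx hpy hqp v (hh ▸ harc) with rfl | rfl
      · exact hvx rfl
      · exact hvy rfl
    refine Finset.mem_filter.mpr ⟨?_, ?_⟩
    · exact Finset.mem_erase.mpr ⟨hap, Finset.mem_erase.mpr ⟨hax, ha⟩⟩
    · rw [cherryArc_iff]; exact Or.inl ⟨harc, hap, hvp, hvx⟩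

lemma cherry_filter_tail_q :
    (((N.verts.erase x).erase p).filter fun b => cherryArc N p q x y q b = true)
      = insert y ((N.verts.filter fun b => N.arc q b = true).erase p) := by
  have hy' : y ∈ N.verts := hy.1
  have hyp : y ≠ p := fun hh => leaf_no_out N hy (hh ▸ hpx)
  have hyx : y ≠ x := Ne.symm hxy
  ext b
  constructor
  · intro hmem
    obtain ⟨hV, harc⟩ := Finset.mem_filter.mp hmem
    rw [cherryArc_iff] at harc
    rcases harc with ⟨h1, _, h3, _⟩ | ⟨_, h2⟩
    · exact Finset.mem_insert.mpr (Or.inr (Finset.mem_erase.mpr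
        ⟨h3, Finset.mem_filter.mpr ⟨(N.arc_mem _ _ h1).2, h1⟩⟩))
    · exact Finset.mem_insert.mpr (Or.inl h2)
  · intro hmem
    rcases Finset.mem_insert.mp hmem with rfl | hmem'
    · refine Finset.mem_filter.mpr ⟨?_, ?_⟩
      · exact Finset.mem_erase.mpr ⟨hyp, Finset.mem_erase.mpr ⟨hyx, hy'⟩⟩
      · rw [cherryArc_iff]; exact Or.inr ⟨rfl, rfl⟩
    · obtain ⟨hbp, hmem''⟩ := Finset.mem_erase.mp hmem'
      obtain ⟨hb, harc⟩ := Finset.mem_filter.mp hmem''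
      have hbx : b ≠ x := by
        intro hh
        have := leaf_parent_unique hx hpx q (hh ▸ harc)
        exact arc_ne N hqp this
      refine Finset.mem_filter.mpr ⟨?_, ?_⟩
      · exact Finset.mem_erase.mpr ⟨hbp, Finset.mem_erase.mpr ⟨hbx, hb⟩⟩
      · rw [cherryArc_iff]; exact Or.inl ⟨harc, arc_ne N hqp, hbp, hbx⟩

lemma cherry_filter_tail {v : ℕ} (hvx : v ≠ x) (hvp : v ≠ p) (hvq : v ≠ q) :
    (((N.verts.erase x).erase p).filter fun b => cherryArc N p q x y v b = true)
      = N.verts.filter fun b => N.arc v b = true := by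
  ext b
  constructor
  · intro hmem
    obtain ⟨hV, harc⟩ := Finset.mem_filter.mp hmem
    rw [cherryArc_iff] at harc
    rcases harc with ⟨h1, _, _, _⟩ | ⟨h1, _⟩
    · exact Finset.mem_filter.mpr ⟨(N.arc_mem _ _ h1).2, h1⟩
    · exact absurd h1 hvq
  · intro hmem
    obtain ⟨hb, harc⟩ := Finset.mem_filter.mp hmem
    have hbp : b ≠ p := by
      intro hh
      exact hvq (cherry_parent hx hy hxy hpx hpy hqp v (hh ▸ harc))
    have hbx : b ≠ x := by
      intro hh
      exact hvp (leaf_parent_unique hx hpx v (hh ▸ harc))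
    refine Finset.mem_filter.mpr ⟨?_, ?_⟩
    · exact Finset.mem_erase.mpr ⟨hbp, Finset.mem_erase.mpr ⟨hbx, hb⟩⟩
    · rw [cherryArc_iff]; exact Or.inl ⟨harc, hvp, hbp, hbx⟩

lemma cherry_indeg {v : ℕ} (hvx : v ≠ x) (hvp : v ≠ p) :
    (((N.verts.erase x).erase p).filter fun a => cherryArc N p q x y a v = true).card
      = (N.verts.filter fun a => N.arc a v = true).card := by
  by_cases hvy : v = y
  · subst hvy
    rw [cherry_filter_head_y hx hy hxy hpx hpy hqp]
    have h1 : inDeg N v = 1 := hy.2.1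
    rw [Finset.card_singleton]
    exact (h1 ▸ rfl : (1 : ℕ) = inDeg N v)
  · rw [cherry_filter_head hx hy hxy hpx hpy hqp hvx hvp hvy]

lemma cherry_outdeg {v : ℕ} (hvx : v ≠ x) (hvp : v ≠ p) :
    (((N.verts.erase x).erase p).filter fun b => cherryArc N p q x y v b = true).card
      = (N.verts.filter fun b => N.arc v b = true).card := by
  by_cases hvq : v = q
  · subst hvq
    rw [cherry_filter_tail_q hx hy hxy hpx hpy hqp]
    have hpmem : p ∈ N.verts.filter fun b => N.arc v b = true :=
      Finset.mem_filter.mpr ⟨(N.arc_mem _ _ hqp).2, hqp⟩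
    have hymem : y ∉ (N.verts.filter fun b => N.arc v b = true).erase p := by
      intro hmem
      have harc := (Finset.mem_filter.mp (Finset.mem_of_mem_erase hmem)).2
      have := leaf_parent_unique hy hpy v harc
      exact arc_ne N hqp this
    rw [Finset.card_insert_of_notMem hymem, Finset.card_erase_of_mem hpmem]
    have : 1 ≤ (N.verts.filter fun b => N.arc v b = true).card :=
      Finset.card_pos.mpr ⟨p, hpmem⟩
    omega
  · rw [cherry_filter_tail hx hy hxy hpx hpy hqp hvx hvp hvq]

/-- The cherry-reduced network. -/
def reduceCherry : Network where
  verts := (N.verts.erase x).erase p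
  arc := cherryArc N p q x y
  root := N.root
  root_mem := by
    have h1 : N.root ≠ x := fun hh => not_leaf_root N (hh ▸ hx)
    have h2 : N.root ≠ p := Ne.symm (head_ne_root N hqp)
    exact Finset.mem_erase.mpr ⟨h2, Finset.mem_erase.mpr ⟨h1, N.root_mem⟩⟩
  arc_mem := by
    intro a b h
    rw [cherryArc_iff] at h
    rcases h with ⟨h1, h2, h3, h4⟩ | ⟨haq, hby⟩
    · have hax : a ≠ x := fun hh => leaf_no_out N hx (hh ▸ h1)
      exact ⟨Finset.mem_erase.mpr ⟨h2, Finset.mem_erase.mpr ⟨hax, (N.arc_mem _ _ h1).1⟩⟩,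
        Finset.mem_erase.mpr ⟨h3, Finset.mem_erase.mpr ⟨h4, (N.arc_mem _ _ h1).2⟩⟩⟩
    · have hqx := cherry_qx hx hy hxy hpx hpy hqp
      have hqp' : q ≠ p := arc_ne N hqp
      have hyp : y ≠ p := fun hh => leaf_no_out N hy (hh ▸ hpx)
      rw [haq, hby]
      exact ⟨Finset.mem_erase.mpr ⟨hqp', Finset.mem_erase.mpr ⟨hqx, (N.arc_mem _ _ hqp).1⟩⟩,
        Finset.mem_erase.mpr ⟨hyp, Finset.mem_erase.mpr ⟨Ne.symm hxy, hy.1⟩⟩⟩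
  acyclic := cherry_acyclic hx hy hxy hpx hpy hqp
  root_indeg := by
    have h1 : N.root ≠ x := fun hh => not_leaf_root N (hh ▸ hx)
    have h2 : N.root ≠ p := Ne.symm (head_ne_root N hqp)
    rw [cherry_indeg hx hy hxy hpx hpy hqp h1 h2]
    exact N.root_indeg
  root_outdeg := by
    have h1 : N.root ≠ x := fun hh => not_leaf_root N (hh ▸ hx)
    have h2 : N.root ≠ p := Ne.symm (head_ne_root N hqp)
    rw [cherry_outdeg hx hy hxy hpx hpy hqp h1 h2]
    exact N.root_outdeg
  nonroot_deg := by
    intro v hv hvroot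
    obtain ⟨hvp, hv'⟩ := Finset.mem_erase.mp hv
    obtain ⟨hvx, hvN⟩ := Finset.mem_erase.mp hv'
    rw [cherry_indeg hx hy hxy hpx hpy hqp hvx hvp,
      cherry_outdeg hx hy hxy hpx hpy hqp hvx hvp]
    exact N.nonroot_deg v hvN hvroot

end Cherry
section Cherry2

variable {N : Network} {x y p q : ℕ} {t : ℕ → ℝ}
variable (hx : IsLeaf N x) (hy : IsLeaf N y) (hxy : x ≠ y)
variable (hpx : N.arc p x = true) (hpy : N.arc p y = true) (hqp : N.arc q p = true)

include hx hy hxy hpx hpy hqp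

lemma cherry_card : ((N.verts.erase x).erase p).card = N.verts.card - 2 := by
  have h1 : x ∈ N.verts := hx.1
  have h2 : p ∈ N.verts.erase x :=
    Finset.mem_erase.mpr ⟨arc_ne N hpx, (N.arc_mem _ _ hpx).1⟩
  rw [Finset.card_erase_of_mem h2, Finset.card_erase_of_mem h1]
  omega

lemma cherry_reduces : ReducesCherry N (reduceCherry hx hy hxy hpx hpy hqp) x y :=
  ⟨p, q, hx, hy, hxy, hpx, hpy, hqp, rfl, rfl, fun a b => cherryArc_iff N p q x y a b⟩

lemma cherry_ret_iff {v : ℕ} (hv : v ∈ (N.verts.erase x).erase p) :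
    IsRet (reduceCherry hx hy hxy hpx hpy hqp) v ↔ IsRet N v := by
  obtain ⟨hvp, hv'⟩ := Finset.mem_erase.mp hv
  obtain ⟨hvx, hvN⟩ := Finset.mem_erase.mp hv'
  have hdeg : inDeg (reduceCherry hx hy hxy hpx hpy hqp) v = inDeg N v :=
    cherry_indeg hx hy hxy hpx hpy hqp hvx hvp
  constructor
  · rintro ⟨_, h2⟩; exact ⟨hvN, by omega⟩
  · rintro ⟨_, h2⟩; exact ⟨hv, by omega⟩

lemma cherry_leaf_iff {v : ℕ} (hv : v ∈ (N.verts.erase x).erase p) :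
    IsLeaf (reduceCherry hx hy hxy hpx hpy hqp) v ↔ IsLeaf N v := by
  obtain ⟨hvp, hv'⟩ := Finset.mem_erase.mp hv
  obtain ⟨hvx, hvN⟩ := Finset.mem_erase.mp hv'
  have hdeg : inDeg (reduceCherry hx hy hxy hpx hpy hqp) v = inDeg N v :=
    cherry_indeg hx hy hxy hpx hpy hqp hvx hvp
  have hdeg2 : outDeg (reduceCherry hx hy hxy hpx hpy hqp) v = outDeg N v :=
    cherry_outdeg hx hy hxy hpx hpy hqp hvx hvp
  constructor
  · rintro ⟨_, h2, h3⟩; exact ⟨hvN, by omega, by omega⟩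
  · rintro ⟨_, h2, h3⟩; exact ⟨hv, by omega, by omega⟩

lemma cherry_tqp (ht : IsHGTConsistent N t) : t q < t p := by
  rcases lt_or_eq_of_le (ht.1.1 q p hqp) with h | h
  · exact h
  · exfalso
    have hret := ht.1.2.1 q p hqp h
    have htree := cherry_tree hx hy hxy hpx hpy hqp
    have := hret.2
    have := htree.2.1
    omega

lemma cherry_hgt (ht : IsHGTConsistent N t) :
    IsHGTConsistent (reduceCherry hx hy hxy hpx hpy hqp) t := by
  set N' := reduceCherry hx hy hxy hpx hpy hqp with hN'
  have harc : ∀ a b : ℕ, N'.arc a b = true ↔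
      ((N.arc a b = true ∧ a ≠ p ∧ b ≠ p ∧ b ≠ x) ∨ (a = q ∧ b = y)) :=
    fun a b => cherryArc_iff N p q x y a b
  have hverts : N'.verts = (N.verts.erase x).erase p := rfl
  have htqy : t q < t y :=
    lt_of_lt_of_le (cherry_tqp hx hy hxy hpx hpy hqp ht) (ht.1.1 p y hpy)
  have hpnotpar : ∀ v, v ≠ x → v ≠ y → ¬ N.arc p v = true := by
    intro v hvx hvy hc
    rcases cherry_children hx hy hxy hpx hpy hqp v hc with rfl | rfl
    · exact hvx rfl
    · exact hvy rfl
  refine ⟨⟨?_, ?_, ?_, ?_⟩, ?_⟩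
  · intro a b hab
    rw [harc] at hab
    rcases hab with ⟨h1, _⟩ | ⟨haq, hby⟩
    · exact ht.1.1 _ _ h1
    · rw [haq, hby]; exact le_of_lt htqy
  · intro a b hab heq
    rw [harc] at hab
    rcases hab with ⟨h1, _, h3, h4⟩ | ⟨haq, hby⟩
    · have hbN := (N.arc_mem _ _ h1).2
      have hbmem : b ∈ N'.verts := by
        rw [hverts]
        exact Finset.mem_erase.mpr ⟨h3, Finset.mem_erase.mpr ⟨h4, hbN⟩⟩
      exact (cherry_ret_iff hx hy hxy hpx hpy hqp hbmem).mpr (ht.1.2.1 _ _ h1 heq)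
    · rw [haq, hby] at heq
      exact absurd heq (ne_of_lt htqy)
  · intro v hint
    obtain ⟨hvmem, hvroot, hvleaf⟩ := hint
    rw [hverts] at hvmem
    obtain ⟨hvp, hv'⟩ := Finset.mem_erase.mp hvmem
    obtain ⟨hvx, hvN⟩ := Finset.mem_erase.mp hv'
    have hint' : IsInternal N v := by
      refine ⟨hvN, hvroot, fun hl => hvleaf ?_⟩
      exact (cherry_leaf_iff hx hy hxy hpx hpy hqp hvmem).mpr hl
    obtain ⟨c, hc, hlt⟩ := ht.1.2.2.1 v hint'
    by_cases hcp : c = p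
    · -- v = q; use y instead
      have hvq : v = q := cherry_parent hx hy hxy hpx hpy hqp v (hcp ▸ hc)
      refine ⟨y, ?_, ?_⟩
      · rw [harc]; exact Or.inr ⟨hvq, rfl⟩
      · rw [hvq]; exact htqy
    · have hcx : c ≠ x := by
        intro hh
        exact hvp (leaf_parent_unique hx hpx v (hh ▸ hc))
      refine ⟨c, ?_, hlt⟩
      rw [harc]
      exact Or.inl ⟨hc, hvp, hcp, hcx⟩
  · intro v a b hret ha hb hab hcon
    have hvmem := hret.1
    rw [hverts] at hvmem
    have hvret : IsRet N v := (cherry_ret_iff hx hy hxy hpx hpy hqp hret.1).mp hret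
    have hvy : v ≠ y := fun hh => ret_not_leaf N hvret (hh ▸ hy)
    have hpar : ∀ c, N'.arc c v = true → N.arc c v = true := by
      intro c hc
      rw [harc] at hc
      rcases hc with ⟨h1, _⟩ | ⟨_, h2⟩
      · exact h1
      · exact absurd h2 hvy
    exact ht.1.2.2.2 v a b hvret (hpar a ha) (hpar b hb) hab hcon
  · intro v hret
    have hvmem := hret.1
    rw [hverts] at hvmem
    obtain ⟨hvp, hv'⟩ := Finset.mem_erase.mp hvmem
    obtain ⟨hvx, hvN⟩ := Finset.mem_erase.mp hv'
    have hvret : IsRet N v := (cherry_ret_iff hx hy hxy hpx hpy hqp hret.1).mp hret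
    have hvy : v ≠ y := fun hh => ret_not_leaf N hvret (hh ▸ hy)
    obtain ⟨u0, ⟨hu0arc, hu0eq⟩, hu0uniq⟩ := ht.2 v hvret
    refine ⟨u0, ⟨?_, hu0eq⟩, ?_⟩
    · rw [harc]
      refine Or.inl ⟨hu0arc, ?_, hvp, hvx⟩
      intro hh
      exact hpnotpar v hvx hvy (hh ▸ hu0arc)
    · intro c ⟨hc, hceq⟩
      rw [harc] at hc
      rcases hc with ⟨h1, _⟩ | ⟨_, h2⟩
      · exact hu0uniq c ⟨h1, hceq⟩
      · exact absurd h2 hvy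

end Cherry2
/-! ### Reticulated cherry reduction -/

def retArc (N : Network) (px py z q x y : ℕ) : ℕ → ℕ → Bool := fun a b =>
  (N.arc a b && !decide (a = px) && !decide (a = py) && !decide (b = px)
    && !decide (b = py))
    || (decide (a = z) && decide (b = x)) || (decide (a = q) && decide (b = y))

lemma retArc_iff (N : Network) (px py z q x y a b : ℕ) :
    retArc N px py z q x y a b = true ↔
      ((N.arc a b = true ∧ a ≠ px ∧ a ≠ py ∧ b ≠ px ∧ b ≠ py) ∨
        (a = z ∧ b = x) ∨ (a = q ∧ b = y)) := by
  simp [retArc, Bool.or_eq_true, Bool.and_eq_true, decide_eq_true_iff,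
    Bool.not_eq_true', decide_eq_false_iff_not]
  tauto

section RetCherry

variable {N : Network} {x y px py z q : ℕ}
variable (hx : IsLeaf N x) (hy : IsLeaf N y) (hpxr : IsRet N px)
variable (ha1 : N.arc px x = true) (ha2 : N.arc py px = true) (ha3 : N.arc py y = true)
variable (ha4 : N.arc z px = true) (hz : z ≠ py) (ha5 : N.arc q py = true)

include hx hy hpxr ha1 ha2 ha3 ha4 hz ha5

lemma rc_pxy : px ≠ y := fun h => ret_not_leaf N hpxr (h ▸ hy)

lemma rc_tree : IsTreeVert N py :=
  tree_of_two_children ha2 ha3 (rc_pxy hx hy hpxr ha1 ha2 ha3 ha4 hz ha5) ha5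

lemma rc_children : ∀ c, N.arc py c = true → c = px ∨ c = y :=
  children_of_tree (rc_tree hx hy hpxr ha1 ha2 ha3 ha4 hz ha5) ha2 ha3
    (rc_pxy hx hy hpxr ha1 ha2 ha3 ha4 hz ha5)

lemma rc_py_parent : ∀ a, N.arc a py = true → a = q :=
  parent_unique (rc_tree hx hy hpxr ha1 ha2 ha3 ha4 hz ha5).2.1 ha5

lemma rc_px_child : ∀ b, N.arc px b = true → b = x :=
  child_unique (ret_outdeg N hpxr) ha1

lemma rc_px_parents : ∀ c, N.arc c px = true → c = py ∨ c = z :=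
  parents_of_ret hpxr ha2 ha4 (Ne.symm hz)

lemma rc_xy : x ≠ y := by
  intro h
  subst h
  have h1 := leaf_parent_unique hx ha1 py ha3
  exact arc_ne N ha2 h1

lemma rc_qpx : q ≠ px := by
  intro h
  have hpyx := rc_px_child hx hy hpxr ha1 ha2 ha3 ha4 hz ha5 py (h ▸ ha5)
  exact leaf_no_out N (hpyx.symm ▸ hx) ha2

lemma rc_zx : z ≠ x := fun h => leaf_no_out N hx (h ▸ ha4)
lemma rc_zy : z ≠ y := fun h => leaf_no_out N hy (h ▸ ha4)
lemma rc_qx : q ≠ x := fun h => leaf_no_out N hx (h ▸ ha5)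
lemma rc_qy : q ≠ y := fun h => leaf_no_out N hy (h ▸ ha5)
lemma rc_xpx : x ≠ px := fun h => ret_not_leaf N hpxr (h ▸ hx)
lemma rc_xpy : x ≠ py := fun h => leaf_no_out N (h ▸ hx) ha2
lemma rc_ypy : y ≠ py := fun h => leaf_no_out N (h ▸ hy) ha2

lemma rc_acyclic : ∀ v : ℕ,
    ¬ Relation.TransGen (fun a b : ℕ => retArc N px py z q x y a b = true) v v := by
  have hzx := rc_zx hx hy hpxr ha1 ha2 ha3 ha4 hz ha5
  have hzy := rc_zy hx hy hpxr ha1 ha2 ha3 ha4 hz ha5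
  have hqx := rc_qx hx hy hpxr ha1 ha2 ha3 ha4 hz ha5
  have hqy := rc_qy hx hy hpxr ha1 ha2 ha3 ha4 hz ha5
  have hnox : ∀ c, ¬ retArc N px py z q x y x c = true := by
    intro c hc
    rw [retArc_iff] at hc
    rcases hc with ⟨h1, _⟩ | ⟨h1, _⟩ | ⟨h1, _⟩
    · exact leaf_no_out N hx h1
    · exact hzx h1.symm
    · exact hqx h1.symm
  have hnoy : ∀ c, ¬ retArc N px py z q x y y c = true := by
    intro c hc
    rw [retArc_iff] at hc
    rcases hc with ⟨h1, _⟩ | ⟨h1, _⟩ | ⟨h1, _⟩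
    · exact leaf_no_out N hy h1
    · exact hzy h1.symm
    · exact hqy h1.symm
  have key : ∀ a b, Relation.TransGen (fun a b : ℕ => retArc N px py z q x y a b = true)
      a b → Relation.TransGen (fun a b : ℕ => N.arc a b = true) a b ∨ b = x ∨ b = y := by
    intro a b h
    induction h with
    | @single b hstep =>
      rw [retArc_iff] at hstep
      rcases hstep with ⟨h1, _⟩ | ⟨_, h2⟩ | ⟨_, h2⟩
      · exact Or.inl (Relation.TransGen.single h1)
      · exact Or.inr (Or.inl h2)
      · exact Or.inr (Or.inr h2)
    | @tail b c hab hstep ih =>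
      rcases ih with ih | hbx | hby
      · rw [retArc_iff] at hstep
        rcases hstep with ⟨h1, _⟩ | ⟨_, h2⟩ | ⟨_, h2⟩
        · exact Or.inl (ih.tail h1)
        · exact Or.inr (Or.inl h2)
        · exact Or.inr (Or.inr h2)
      · exact absurd (hbx ▸ hstep) (hnox c)
      · exact absurd (hby ▸ hstep) (hnoy c)
  intro v hv
  by_cases hvx : v = x
  · exact transGen_no_succ (hvx ▸ hnox) hv
  by_cases hvy : v = y
  · exact transGen_no_succ (hvy ▸ hnoy) hv
  rcases key v v hv with hcyc | hvx' | hvy'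
  · exact N.acyclic v hcyc
  · exact hvx hvx'
  · exact hvy hvy'

lemma rc_filter_head_x :
    (((N.verts.erase px).erase py).filter
      fun a => retArc N px py z q x y a x = true) = {z} := by
  have hzpx : z ≠ px := arc_ne N ha4
  have hzN : z ∈ N.verts := (N.arc_mem _ _ ha4).1
  ext a
  constructor
  · intro hmem
    obtain ⟨hV, harc⟩ := Finset.mem_filter.mp hmem
    rw [retArc_iff] at harc
    rcases harc with ⟨h1, h2, _, _, _⟩ | ⟨h1, _⟩ | ⟨_, h2⟩
    · exact absurd (leaf_parent_unique hx ha1 a h1) h2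
    · exact Finset.mem_singleton.mpr h1
    · exact absurd h2 (rc_xy hx hy hpxr ha1 ha2 ha3 ha4 hz ha5)
  · intro hmem
    rw [Finset.mem_singleton] at hmem
    subst hmem
    refine Finset.mem_filter.mpr ⟨Finset.mem_erase.mpr ⟨hz, Finset.mem_erase.mpr
      ⟨hzpx, hzN⟩⟩, ?_⟩
    rw [retArc_iff]
    exact Or.inr (Or.inl ⟨rfl, rfl⟩)

lemma rc_filter_head_y :
    (((N.verts.erase px).erase py).filter
      fun a => retArc N px py z q x y a y = true) = {q} := by
  have hqpy : q ≠ py := arc_ne N ha5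
  have hqpx := rc_qpx hx hy hpxr ha1 ha2 ha3 ha4 hz ha5
  have hqN : q ∈ N.verts := (N.arc_mem _ _ ha5).1
  ext a
  constructor
  · intro hmem
    obtain ⟨hV, harc⟩ := Finset.mem_filter.mp hmem
    rw [retArc_iff] at harc
    rcases harc with ⟨h1, _, h3, _, _⟩ | ⟨_, h2⟩ | ⟨h1, _⟩
    · exact absurd (leaf_parent_unique hy ha3 a h1) h3
    · exact absurd h2 (Ne.symm (rc_xy hx hy hpxr ha1 ha2 ha3 ha4 hz ha5))
    · exact Finset.mem_singleton.mpr h1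
  · intro hmem
    rw [Finset.mem_singleton] at hmem
    subst hmem
    refine Finset.mem_filter.mpr ⟨Finset.mem_erase.mpr ⟨hqpy, Finset.mem_erase.mpr
      ⟨hqpx, hqN⟩⟩, ?_⟩
    rw [retArc_iff]
    exact Or.inr (Or.inr ⟨rfl, rfl⟩)

lemma rc_filter_head {v : ℕ} (hvpx : v ≠ px) (hvpy : v ≠ py) (hvx : v ≠ x)
    (hvy : v ≠ y) :
    (((N.verts.erase px).erase py).filter fun a => retArc N px py z q x y a v = true)
      = N.verts.filter fun a => N.arc a v = true := by
  ext a
  constructor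
  · intro hmem
    obtain ⟨hV, harc⟩ := Finset.mem_filter.mp hmem
    rw [retArc_iff] at harc
    rcases harc with ⟨h1, _, _, _, _⟩ | ⟨_, h2⟩ | ⟨_, h2⟩
    · exact Finset.mem_filter.mpr ⟨(N.arc_mem _ _ h1).1, h1⟩
    · exact absurd h2 hvx
    · exact absurd h2 hvy
  · intro hmem
    obtain ⟨ha, harc⟩ := Finset.mem_filter.mp hmem
    have hapx : a ≠ px := by
      intro hh
      exact hvx (rc_px_child hx hy hpxr ha1 ha2 ha3 ha4 hz ha5 v (hh ▸ harc))
    have hapy : a ≠ py := by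
      intro hh
      rcases rc_children hx hy hpxr ha1 ha2 ha3 ha4 hz ha5 v (hh ▸ harc) with rfl | rfl
      · exact hvpx rfl
      · exact hvy rfl
    refine Finset.mem_filter.mpr ⟨Finset.mem_erase.mpr ⟨hapy, Finset.mem_erase.mpr
      ⟨hapx, ha⟩⟩, ?_⟩
    rw [retArc_iff]
    exact Or.inl ⟨harc, hapx, hapy, hvpx, hvpy⟩

lemma rc_filter_tail {v : ℕ} (hvpx : v ≠ px) (hvpy : v ≠ py) (hvz : v ≠ z)
    (hvq : v ≠ q) :
    (((N.verts.erase px).erase py).filter fun b => retArc N px py z q x y v b = true)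
      = N.verts.filter fun b => N.arc v b = true := by
  ext b
  constructor
  · intro hmem
    obtain ⟨hV, harc⟩ := Finset.mem_filter.mp hmem
    rw [retArc_iff] at harc
    rcases harc with ⟨h1, _, _, _, _⟩ | ⟨h1, _⟩ | ⟨h1, _⟩
    · exact Finset.mem_filter.mpr ⟨(N.arc_mem _ _ h1).2, h1⟩
    · exact absurd h1 hvz
    · exact absurd h1 hvq
  · intro hmem
    obtain ⟨hb, harc⟩ := Finset.mem_filter.mp hmem
    have hbpx : b ≠ px := by
      intro hh
      rcases rc_px_parents hx hy hpxr ha1 ha2 ha3 ha4 hz ha5 v (hh ▸ harc) with rfl | rfl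
      · exact hvpy rfl
      · exact hvz rfl
    have hbpy : b ≠ py := by
      intro hh
      exact hvq (rc_py_parent hx hy hpxr ha1 ha2 ha3 ha4 hz ha5 v (hh ▸ harc))
    refine Finset.mem_filter.mpr ⟨Finset.mem_erase.mpr ⟨hbpy, Finset.mem_erase.mpr
      ⟨hbpx, hb⟩⟩, ?_⟩
    rw [retArc_iff]
    exact Or.inl ⟨harc, hvpx, hvpy, hbpx, hbpy⟩

lemma rc_filter_tail_z (hzq : z ≠ q) :
    (((N.verts.erase px).erase py).filter fun b => retArc N px py z q x y z b = true)
      = insert x ((N.verts.filter fun b => N.arc z b = true).erase px) := by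
  have hzpx : z ≠ px := arc_ne N ha4
  have hxN : x ∈ N.verts := hx.1
  have hxpx := rc_xpx hx hy hpxr ha1 ha2 ha3 ha4 hz ha5
  have hxpy := rc_xpy hx hy hpxr ha1 ha2 ha3 ha4 hz ha5
  ext b
  constructor
  · intro hmem
    obtain ⟨hV, harc⟩ := Finset.mem_filter.mp hmem
    rw [retArc_iff] at harc
    rcases harc with ⟨h1, _, _, h4, _⟩ | ⟨_, h2⟩ | ⟨h1, _⟩
    · exact Finset.mem_insert.mpr (Or.inr (Finset.mem_erase.mpr
        ⟨h4, Finset.mem_filter.mpr ⟨(N.arc_mem _ _ h1).2, h1⟩⟩))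
    · exact Finset.mem_insert.mpr (Or.inl h2)
    · exact absurd h1 hzq
  · intro hmem
    rcases Finset.mem_insert.mp hmem with rfl | hmem'
    · refine Finset.mem_filter.mpr ⟨Finset.mem_erase.mpr ⟨hxpy, Finset.mem_erase.mpr
        ⟨hxpx, hxN⟩⟩, ?_⟩
      rw [retArc_iff]
      exact Or.inr (Or.inl ⟨rfl, rfl⟩)
    · obtain ⟨hbpx, hmem''⟩ := Finset.mem_erase.mp hmem'
      obtain ⟨hb, harc⟩ := Finset.mem_filter.mp hmem''
      have hbpy : b ≠ py := by
        intro hh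
        exact hzq (rc_py_parent hx hy hpxr ha1 ha2 ha3 ha4 hz ha5 z (hh ▸ harc))
      refine Finset.mem_filter.mpr ⟨Finset.mem_erase.mpr ⟨hbpy, Finset.mem_erase.mpr
        ⟨hbpx, hb⟩⟩, ?_⟩
      rw [retArc_iff]
      exact Or.inl ⟨harc, hzpx, hz, hbpx, hbpy⟩

lemma rc_filter_tail_q (hzq : z ≠ q) :
    (((N.verts.erase px).erase py).filter fun b => retArc N px py z q x y q b = true)
      = insert y ((N.verts.filter fun b => N.arc q b = true).erase py) := by
  have hqpy : q ≠ py := arc_ne N ha5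
  have hqpx := rc_qpx hx hy hpxr ha1 ha2 ha3 ha4 hz ha5
  have hyN : y ∈ N.verts := hy.1
  have hypy := rc_ypy hx hy hpxr ha1 ha2 ha3 ha4 hz ha5
  have hypx := Ne.symm (rc_pxy hx hy hpxr ha1 ha2 ha3 ha4 hz ha5)
  ext b
  constructor
  · intro hmem
    obtain ⟨hV, harc⟩ := Finset.mem_filter.mp hmem
    rw [retArc_iff] at harc
    rcases harc with ⟨h1, _, _, _, h5⟩ | ⟨h1, _⟩ | ⟨_, h2⟩
    · exact Finset.mem_insert.mpr (Or.inr (Finset.mem_erase.mpr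
        ⟨h5, Finset.mem_filter.mpr ⟨(N.arc_mem _ _ h1).2, h1⟩⟩))
    · exact absurd h1.symm hzq
    · exact Finset.mem_insert.mpr (Or.inl h2)
  · intro hmem
    rcases Finset.mem_insert.mp hmem with rfl | hmem'
    · refine Finset.mem_filter.mpr ⟨Finset.mem_erase.mpr ⟨hypy, Finset.mem_erase.mpr
        ⟨hypx, hyN⟩⟩, ?_⟩
      rw [retArc_iff]
      exact Or.inr (Or.inr ⟨rfl, rfl⟩)
    · obtain ⟨hbpy, hmem''⟩ := Finset.mem_erase.mp hmem'
      obtain ⟨hb, harc⟩ := Finset.mem_filter.mp hmem''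
      have hbpx : b ≠ px := by
        intro hh
        rcases rc_px_parents hx hy hpxr ha1 ha2 ha3 ha4 hz ha5 q (hh ▸ harc) with rfl | rfl
        · exact hqpy rfl
        · exact hzq rfl
      refine Finset.mem_filter.mpr ⟨Finset.mem_erase.mpr ⟨hbpy, Finset.mem_erase.mpr
        ⟨hbpx, hb⟩⟩, ?_⟩
      rw [retArc_iff]
      exact Or.inl ⟨harc, hqpx, hqpy, hbpx, hbpy⟩

lemma rc_filter_tail_zq (hzq : z = q) :
    (((N.verts.erase px).erase py).filter fun b => retArc N px py z q x y z b = true)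
      = {x, y} := by
  have hzpx : z ≠ px := arc_ne N ha4
  have hxN : x ∈ N.verts := hx.1
  have hyN : y ∈ N.verts := hy.1
  have hxpx := rc_xpx hx hy hpxr ha1 ha2 ha3 ha4 hz ha5
  have hxpy := rc_xpy hx hy hpxr ha1 ha2 ha3 ha4 hz ha5
  have hypy := rc_ypy hx hy hpxr ha1 ha2 ha3 ha4 hz ha5
  have hypx := Ne.symm (rc_pxy hx hy hpxr ha1 ha2 ha3 ha4 hz ha5)
  have hchild : ∀ c, N.arc z c = true → c = px ∨ c = py := by
    intro c hc
    have hout2 : 2 ≤ (N.verts.filter fun b => N.arc z b = true).card :=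
      two_le_card_of_two_mem (N.arc_mem _ _ ha4).2 ha4 (N.arc_mem _ _ (hzq ▸ ha5)).2
        (hzq ▸ ha5) (fun hh => (arc_ne N ha2) hh.symm)
    have hzroot : z ≠ N.root := by
      intro hh
      have := N.root_outdeg
      rw [← hh] at this
      omega
    rcases N.nonroot_deg z (N.arc_mem _ _ ha4).1 hzroot with ⟨_, h2⟩ | ⟨_, h2⟩ | ⟨_, h2⟩
    · exact card_two_complete h2 (N.arc_mem _ _ ha4).2 ha4
        (N.arc_mem _ _ (hzq ▸ ha5)).2 (hzq ▸ ha5)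
        (fun hh => (arc_ne N ha2) hh.symm) c (N.arc_mem _ _ hc).2 hc
    · omega
    · omega
  ext b
  constructor
  · intro hmem
    obtain ⟨hV, harc⟩ := Finset.mem_filter.mp hmem
    rw [retArc_iff] at harc
    rcases harc with ⟨h1, _, _, h4, h5⟩ | ⟨_, h2⟩ | ⟨_, h2⟩
    · rcases hchild b h1 with rfl | rfl
      · exact absurd rfl h4
      · exact absurd rfl h5
    · exact Finset.mem_insert.mpr (Or.inl h2)
    · exact Finset.mem_insert.mpr (Or.inr (Finset.mem_singleton.mpr h2))
  · intro hmem
    rcases Finset.mem_insert.mp hmem with rfl | hmem'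
    · refine Finset.mem_filter.mpr ⟨Finset.mem_erase.mpr ⟨hxpy, Finset.mem_erase.mpr
        ⟨hxpx, hxN⟩⟩, ?_⟩
      rw [retArc_iff]
      exact Or.inr (Or.inl ⟨rfl, rfl⟩)
    · rw [Finset.mem_singleton] at hmem'
      subst hmem'
      refine Finset.mem_filter.mpr ⟨Finset.mem_erase.mpr ⟨hypy, Finset.mem_erase.mpr
        ⟨hypx, hyN⟩⟩, ?_⟩
      rw [retArc_iff]
      exact Or.inr (Or.inr ⟨hzq, rfl⟩)

lemma rc_indeg {v : ℕ} (hvpx : v ≠ px) (hvpy : v ≠ py) :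
    (((N.verts.erase px).erase py).filter
      fun a => retArc N px py z q x y a v = true).card
      = (N.verts.filter fun a => N.arc a v = true).card := by
  by_cases hvx : v = x
  · subst hvx
    rw [rc_filter_head_x hx hy hpxr ha1 ha2 ha3 ha4 hz ha5, Finset.card_singleton]
    have h1 : inDeg N v = 1 := hx.2.1
    exact (h1 ▸ rfl : (1 : ℕ) = inDeg N v)
  by_cases hvy : v = y
  · subst hvy
    rw [rc_filter_head_y hx hy hpxr ha1 ha2 ha3 ha4 hz ha5, Finset.card_singleton]
    have h1 : inDeg N v = 1 := hy.2.1
    exact (h1 ▸ rfl : (1 : ℕ) = inDeg N v)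
  · rw [rc_filter_head hx hy hpxr ha1 ha2 ha3 ha4 hz ha5 hvpx hvpy hvx hvy]

lemma rc_outdeg {v : ℕ} (hvpx : v ≠ px) (hvpy : v ≠ py) :
    (((N.verts.erase px).erase py).filter
      fun b => retArc N px py z q x y v b = true).card
      = (N.verts.filter fun b => N.arc v b = true).card := by
  by_cases hzq : z = q
  · by_cases hvz : v = z
    · subst hvz
      rw [rc_filter_tail_zq hx hy hpxr ha1 ha2 ha3 ha4 hz ha5 hzq]
      have hout2 : 2 ≤ (N.verts.filter fun b => N.arc v b = true).card :=
        two_le_card_of_two_mem (N.arc_mem _ _ ha4).2 ha4 (N.arc_mem _ _ (hzq ▸ ha5)).2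
          (hzq ▸ ha5) (fun hh => (arc_ne N ha2) hh.symm)
      have hvroot : v ≠ N.root := by
        intro hh
        have := N.root_outdeg
        rw [← hh] at this
        omega
      have hcard2 : ({x, y} : Finset ℕ).card = 2 := by
        rw [Finset.card_insert_of_notMem
          (by simp [rc_xy hx hy hpxr ha1 ha2 ha3 ha4 hz ha5]), Finset.card_singleton]
      rcases N.nonroot_deg v (N.arc_mem _ _ ha4).1 hvroot with ⟨_, h2⟩ | ⟨_, h2⟩ | ⟨_, h2⟩
      · rw [hcard2, h2]
      · omega
      · omega
    · rw [rc_filter_tail hx hy hpxr ha1 ha2 ha3 ha4 hz ha5 hvpx hvpy hvz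
        (fun hh => hvz (hh.trans hzq.symm))]
  by_cases hvz : v = z
  · subst hvz
    rw [rc_filter_tail_z hx hy hpxr ha1 ha2 ha3 ha4 hz ha5 hzq]
    have hpxmem : px ∈ N.verts.filter fun b => N.arc v b = true :=
      Finset.mem_filter.mpr ⟨(N.arc_mem _ _ ha4).2, ha4⟩
    have hxmem : x ∉ (N.verts.filter fun b => N.arc v b = true).erase px := by
      intro hmem
      have harc := (Finset.mem_filter.mp (Finset.mem_of_mem_erase hmem)).2
      exact (arc_ne N ha4) (leaf_parent_unique hx ha1 v harc)
    rw [Finset.card_insert_of_notMem hxmem, Finset.card_erase_of_mem hpxmem]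
    have : 1 ≤ (N.verts.filter fun b => N.arc v b = true).card :=
      Finset.card_pos.mpr ⟨px, hpxmem⟩
    omega
  by_cases hvq : v = q
  · subst hvq
    rw [rc_filter_tail_q hx hy hpxr ha1 ha2 ha3 ha4 hz ha5 hzq]
    have hpymem : py ∈ N.verts.filter fun b => N.arc v b = true :=
      Finset.mem_filter.mpr ⟨(N.arc_mem _ _ ha5).2, ha5⟩
    have hymem : y ∉ (N.verts.filter fun b => N.arc v b = true).erase py := by
      intro hmem
      have harc := (Finset.mem_filter.mp (Finset.mem_of_mem_erase hmem)).2
      exact (arc_ne N ha5) (leaf_parent_unique hy ha3 v harc)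
    rw [Finset.card_insert_of_notMem hymem, Finset.card_erase_of_mem hpymem]
    have : 1 ≤ (N.verts.filter fun b => N.arc v b = true).card :=
      Finset.card_pos.mpr ⟨py, hpymem⟩
    omega
  · rw [rc_filter_tail hx hy hpxr ha1 ha2 ha3 ha4 hz ha5 hvpx hvpy hvz hvq]

/-- The reticulated-cherry-reduced network. -/
def reduceRetCherry : Network where
  verts := (N.verts.erase px).erase py
  arc := retArc N px py z q x y
  root := N.root
  root_mem := by
    have h1 : N.root ≠ px := Ne.symm (head_ne_root N ha2)
    have h2 : N.root ≠ py := Ne.symm (head_ne_root N ha5)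
    exact Finset.mem_erase.mpr ⟨h2, Finset.mem_erase.mpr ⟨h1, N.root_mem⟩⟩
  arc_mem := by
    intro a b h
    rw [retArc_iff] at h
    rcases h with ⟨h1, h2, h3, h4, h5⟩ | ⟨haz, hbx⟩ | ⟨haq, hby⟩
    · exact ⟨Finset.mem_erase.mpr ⟨h3, Finset.mem_erase.mpr ⟨h2, (N.arc_mem _ _ h1).1⟩⟩,
        Finset.mem_erase.mpr ⟨h5, Finset.mem_erase.mpr ⟨h4, (N.arc_mem _ _ h1).2⟩⟩⟩
    · rw [haz, hbx]
      exact ⟨Finset.mem_erase.mpr ⟨hz, Finset.mem_erase.mpr ⟨arc_ne N ha4,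
          (N.arc_mem _ _ ha4).1⟩⟩,
        Finset.mem_erase.mpr ⟨rc_xpy hx hy hpxr ha1 ha2 ha3 ha4 hz ha5,
          Finset.mem_erase.mpr ⟨rc_xpx hx hy hpxr ha1 ha2 ha3 ha4 hz ha5, hx.1⟩⟩⟩
    · rw [haq, hby]
      exact ⟨Finset.mem_erase.mpr ⟨arc_ne N ha5, Finset.mem_erase.mpr
          ⟨rc_qpx hx hy hpxr ha1 ha2 ha3 ha4 hz ha5, (N.arc_mem _ _ ha5).1⟩⟩,
        Finset.mem_erase.mpr ⟨rc_ypy hx hy hpxr ha1 ha2 ha3 ha4 hz ha5,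
          Finset.mem_erase.mpr ⟨Ne.symm (rc_pxy hx hy hpxr ha1 ha2 ha3 ha4 hz ha5),
            hy.1⟩⟩⟩
  acyclic := rc_acyclic hx hy hpxr ha1 ha2 ha3 ha4 hz ha5
  root_indeg := by
    have h1 : N.root ≠ px := Ne.symm (head_ne_root N ha2)
    have h2 : N.root ≠ py := Ne.symm (head_ne_root N ha5)
    rw [rc_indeg hx hy hpxr ha1 ha2 ha3 ha4 hz ha5 h1 h2]
    exact N.root_indeg
  root_outdeg := by
    have h1 : N.root ≠ px := Ne.symm (head_ne_root N ha2)
    have h2 : N.root ≠ py := Ne.symm (head_ne_root N ha5)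
    rw [rc_outdeg hx hy hpxr ha1 ha2 ha3 ha4 hz ha5 h1 h2]
    exact N.root_outdeg
  nonroot_deg := by
    intro v hv hvroot
    obtain ⟨hvpy, hv'⟩ := Finset.mem_erase.mp hv
    obtain ⟨hvpx, hvN⟩ := Finset.mem_erase.mp hv'
    rw [rc_indeg hx hy hpxr ha1 ha2 ha3 ha4 hz ha5 hvpx hvpy,
      rc_outdeg hx hy hpxr ha1 ha2 ha3 ha4 hz ha5 hvpx hvpy]
    exact N.nonroot_deg v hvN hvroot

end RetCherry
section RetCherry2

variable {N : Network} {x y px py z q : ℕ} {t : ℕ → ℝ}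
variable (hx : IsLeaf N x) (hy : IsLeaf N y) (hpxr : IsRet N px)
variable (ha1 : N.arc px x = true) (ha2 : N.arc py px = true) (ha3 : N.arc py y = true)
variable (ha4 : N.arc z px = true) (hz : z ≠ py) (ha5 : N.arc q py = true)

include hx hy hpxr ha1 ha2 ha3 ha4 hz ha5

lemma rc_card : ((N.verts.erase px).erase py).card = N.verts.card - 2 := by
  have h1 : px ∈ N.verts := hpxr.1
  have h2 : py ∈ N.verts.erase px :=
    Finset.mem_erase.mpr ⟨arc_ne N ha2, (N.arc_mem _ _ ha2).1⟩
  rw [Finset.card_erase_of_mem h2, Finset.card_erase_of_mem h1]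
  omega

lemma rc_reduces :
    ReducesRetCherry N (reduceRetCherry hx hy hpxr ha1 ha2 ha3 ha4 hz ha5) x y :=
  ⟨px, py, z, q, hx, hy, hpxr, ha1, ha2, ha3, ha4, hz, ha5, rfl, rfl,
    fun a b => retArc_iff N px py z q x y a b⟩

lemma rc_ret_iff {v : ℕ} (hv : v ∈ (N.verts.erase px).erase py) :
    IsRet (reduceRetCherry hx hy hpxr ha1 ha2 ha3 ha4 hz ha5) v ↔ IsRet N v := by
  obtain ⟨hvpy, hv'⟩ := Finset.mem_erase.mp hv
  obtain ⟨hvpx, hvN⟩ := Finset.mem_erase.mp hv'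
  have hdeg : inDeg (reduceRetCherry hx hy hpxr ha1 ha2 ha3 ha4 hz ha5) v = inDeg N v :=
    rc_indeg hx hy hpxr ha1 ha2 ha3 ha4 hz ha5 hvpx hvpy
  constructor
  · rintro ⟨_, h2⟩; exact ⟨hvN, by omega⟩
  · rintro ⟨_, h2⟩; exact ⟨hv, by omega⟩

lemma rc_leaf_iff {v : ℕ} (hv : v ∈ (N.verts.erase px).erase py) :
    IsLeaf (reduceRetCherry hx hy hpxr ha1 ha2 ha3 ha4 hz ha5) v ↔ IsLeaf N v := by
  obtain ⟨hvpy, hv'⟩ := Finset.mem_erase.mp hv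
  obtain ⟨hvpx, hvN⟩ := Finset.mem_erase.mp hv'
  have hdeg : inDeg (reduceRetCherry hx hy hpxr ha1 ha2 ha3 ha4 hz ha5) v = inDeg N v :=
    rc_indeg hx hy hpxr ha1 ha2 ha3 ha4 hz ha5 hvpx hvpy
  have hdeg2 : outDeg (reduceRetCherry hx hy hpxr ha1 ha2 ha3 ha4 hz ha5) v
      = outDeg N v := rc_outdeg hx hy hpxr ha1 ha2 ha3 ha4 hz ha5 hvpx hvpy
  constructor
  · rintro ⟨_, h2, h3⟩; exact ⟨hvN, by omega, by omega⟩
  · rintro ⟨_, h2, h3⟩; exact ⟨hv, by omega, by omega⟩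

lemma rc_hgt (ht : IsHGTConsistent N t) :
    IsHGTConsistent (reduceRetCherry hx hy hpxr ha1 ha2 ha3 ha4 hz ha5) t := by
  set N' := reduceRetCherry hx hy hpxr ha1 ha2 ha3 ha4 hz ha5 with hN'
  have harc : ∀ a b : ℕ, N'.arc a b = true ↔
      ((N.arc a b = true ∧ a ≠ px ∧ a ≠ py ∧ b ≠ px ∧ b ≠ py) ∨
        (a = z ∧ b = x) ∨ (a = q ∧ b = y)) :=
    fun a b => retArc_iff N px py z q x y a b
  have hverts : N'.verts = (N.verts.erase px).erase py := rfl
  have htpxx : t px < t x := by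
    rcases lt_or_eq_of_le (ht.1.1 px x ha1) with h | h
    · exact h
    · exfalso
      have hret := ht.1.2.1 px x ha1 h
      have := hret.2
      have := hx.2.1
      omega
  have htzx : t z < t x := lt_of_le_of_lt (ht.1.1 z px ha4) htpxx
  have htqpy : t q < t py := by
    rcases lt_or_eq_of_le (ht.1.1 q py ha5) with h | h
    · exact h
    · exfalso
      have hret := ht.1.2.1 q py ha5 h
      have := hret.2
      have := (rc_tree hx hy hpxr ha1 ha2 ha3 ha4 hz ha5).2.1
      omega
  have htqy : t q < t y := lt_of_lt_of_le htqpy (ht.1.1 py y ha3)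
  refine ⟨⟨?_, ?_, ?_, ?_⟩, ?_⟩
  · intro a b hab
    rw [harc] at hab
    rcases hab with ⟨h1, _⟩ | ⟨haz, hbx⟩ | ⟨haq, hby⟩
    · exact ht.1.1 _ _ h1
    · rw [haz, hbx]; exact le_of_lt htzx
    · rw [haq, hby]; exact le_of_lt htqy
  · intro a b hab heq
    rw [harc] at hab
    rcases hab with ⟨h1, _, _, h4, h5⟩ | ⟨haz, hbx⟩ | ⟨haq, hby⟩
    · have hbN := (N.arc_mem _ _ h1).2
      have hbmem : b ∈ N'.verts := by
        rw [hverts]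
        exact Finset.mem_erase.mpr ⟨h5, Finset.mem_erase.mpr ⟨h4, hbN⟩⟩
      exact (rc_ret_iff hx hy hpxr ha1 ha2 ha3 ha4 hz ha5 hbmem).mpr
        (ht.1.2.1 _ _ h1 heq)
    · rw [haz, hbx] at heq
      exact absurd heq (ne_of_lt htzx)
    · rw [haq, hby] at heq
      exact absurd heq (ne_of_lt htqy)
  · intro v hint
    obtain ⟨hvmem, hvroot, hvleaf⟩ := hint
    rw [hverts] at hvmem
    obtain ⟨hvpy, hv'⟩ := Finset.mem_erase.mp hvmem
    obtain ⟨hvpx, hvN⟩ := Finset.mem_erase.mp hv'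
    have hint' : IsInternal N v := by
      refine ⟨hvN, hvroot, fun hl => hvleaf ?_⟩
      exact (rc_leaf_iff hx hy hpxr ha1 ha2 ha3 ha4 hz ha5 hvmem).mpr hl
    obtain ⟨c, hc, hlt⟩ := ht.1.2.2.1 v hint'
    by_cases hcpx : c = px
    · -- v is a parent of px in V', i.e. v = z
      have hvz : v = z := by
        rcases rc_px_parents hx hy hpxr ha1 ha2 ha3 ha4 hz ha5 v (hcpx ▸ hc)
          with rfl | rfl
        · exact absurd rfl hvpy
        · rfl
      refine ⟨x, ?_, ?_⟩
      · rw [harc]; exact Or.inr (Or.inl ⟨hvz, rfl⟩)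
      · calc t v < t c := hlt
          _ ≤ t x := by rw [hcpx]; exact le_of_lt htpxx
    by_cases hcpy : c = py
    · have hvq : v = q := rc_py_parent hx hy hpxr ha1 ha2 ha3 ha4 hz ha5 v (hcpy ▸ hc)
      refine ⟨y, ?_, ?_⟩
      · rw [harc]; exact Or.inr (Or.inr ⟨hvq, rfl⟩)
      · calc t v < t c := hlt
          _ ≤ t y := by rw [hcpy]; exact ht.1.1 py y ha3
    · refine ⟨c, ?_, hlt⟩
      rw [harc]
      exact Or.inl ⟨hc, hvpx, hvpy, hcpx, hcpy⟩
  · intro v a b hret ha hb hab hcon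
    have hvret : IsRet N v := (rc_ret_iff hx hy hpxr ha1 ha2 ha3 ha4 hz ha5 hret.1).mp hret
    have hvx : v ≠ x := fun hh => ret_not_leaf N hvret (hh ▸ hx)
    have hvy : v ≠ y := fun hh => ret_not_leaf N hvret (hh ▸ hy)
    have hpar : ∀ c, N'.arc c v = true → N.arc c v = true := by
      intro c hc
      rw [harc] at hc
      rcases hc with ⟨h1, _⟩ | ⟨_, h2⟩ | ⟨_, h2⟩
      · exact h1
      · exact absurd h2 hvx
      · exact absurd h2 hvy
    exact ht.1.2.2.2 v a b hvret (hpar a ha) (hpar b hb) hab hcon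
  · intro v hret
    have hvmem := hret.1
    rw [hverts] at hvmem
    obtain ⟨hvpy, hv'⟩ := Finset.mem_erase.mp hvmem
    obtain ⟨hvpx, hvN⟩ := Finset.mem_erase.mp hv'
    have hvret : IsRet N v := (rc_ret_iff hx hy hpxr ha1 ha2 ha3 ha4 hz ha5 hret.1).mp hret
    have hvx : v ≠ x := fun hh => ret_not_leaf N hvret (hh ▸ hx)
    have hvy : v ≠ y := fun hh => ret_not_leaf N hvret (hh ▸ hy)
    obtain ⟨u0, ⟨hu0arc, hu0eq⟩, hu0uniq⟩ := ht.2 v hvret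
    refine ⟨u0, ⟨?_, hu0eq⟩, ?_⟩
    · rw [harc]
      refine Or.inl ⟨hu0arc, ?_, ?_, hvpx, hvpy⟩
      · intro hh
        exact hvx (rc_px_child hx hy hpxr ha1 ha2 ha3 ha4 hz ha5 v (hh ▸ hu0arc))
      · intro hh
        rcases rc_children hx hy hpxr ha1 ha2 ha3 ha4 hz ha5 v (hh ▸ hu0arc) with rfl | rfl
        · exact absurd rfl hvpx
        · exact absurd rfl hvy
    · intro c ⟨hc, hceq⟩
      rw [harc] at hc
      rcases hc with ⟨h1, _⟩ | ⟨_, h2⟩ | ⟨_, h2⟩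
      · exact hu0uniq c ⟨h1, hceq⟩
      · exact absurd h2 hvx
      · exact absurd h2 hvy

end RetCherry2
lemma verts_sub_of_leaf_child (N : Network) {c : ℕ} (hc : N.arc N.root c = true)
    (hcl : IsLeaf N c) : ∀ v ∈ N.verts, v = N.root ∨ v = c := by
  intro v hv
  have h := root_reaches N hv
  clear hv
  induction h with
  | refl => exact Or.inl rfl
  | tail hab harc ih =>
    rcases ih with rfl | rfl
    · exact Or.inr (child_unique N.root_outdeg hc _ harc)
    · exact absurd harc (fun hh => leaf_no_out N hcl hh)

lemma exists_cherry (N : Network) (t : ℕ → ℝ) (ht : IsHGTConsistent N t)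
    (hcard : 3 ≤ N.verts.card) :
    (∃ x y p q : ℕ, IsLeaf N x ∧ IsLeaf N y ∧ x ≠ y ∧ N.arc p x = true ∧
      N.arc p y = true ∧ N.arc q p = true) ∨
    (∃ x y px py z q : ℕ, IsLeaf N x ∧ IsLeaf N y ∧ IsRet N px ∧
      N.arc px x = true ∧ N.arc py px = true ∧ N.arc py y = true ∧
      N.arc z px = true ∧ z ≠ py ∧ N.arc q py = true) := by
  classical
  set S : Finset ℕ := N.verts.filter (fun v => ¬ IsLeaf N v) with hS
  have hSne : S.Nonempty := ⟨N.root, by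
    rw [hS, Finset.mem_filter]
    exact ⟨N.root_mem, not_leaf_root N⟩⟩
  obtain ⟨m, hmS, hmax⟩ := S.exists_max_image t hSne
  rw [hS, Finset.mem_filter] at hmS
  have hmaxle : ∀ v ∈ N.verts, ¬ IsLeaf N v → t v ≤ t m := by
    intro v hv hnl
    exact hmax v (by rw [hS, Finset.mem_filter]; exact ⟨hv, hnl⟩)
  -- Main subderivation: a tree vertex attaining the maximum yields the goal.
  have main : ∀ u : ℕ, IsTreeVert N u → (∀ v ∈ N.verts, ¬ IsLeaf N v → t v ≤ t u) →
      (∃ x y p q : ℕ, IsLeaf N x ∧ IsLeaf N y ∧ x ≠ y ∧ N.arc p x = true ∧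
        N.arc p y = true ∧ N.arc q p = true) ∨
      (∃ x y px py z q : ℕ, IsLeaf N x ∧ IsLeaf N y ∧ IsRet N px ∧
        N.arc px x = true ∧ N.arc py px = true ∧ N.arc py y = true ∧
        N.arc z px = true ∧ z ≠ py ∧ N.arc q py = true) := by
    intro u hu hmaxu
    obtain ⟨qq, hqq, _⟩ := card_one_unique hu.2.1
    have hqp : N.arc qq u = true := hqq.2
    -- inner: leaf child y0 and other child o
    have main2 : ∀ y0 o : ℕ, IsLeaf N y0 → N.arc u y0 = true → N.arc u o = true →
        o ≠ y0 →
        (∃ x y p q : ℕ, IsLeaf N x ∧ IsLeaf N y ∧ x ≠ y ∧ N.arc p x = true ∧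
          N.arc p y = true ∧ N.arc q p = true) ∨
        (∃ x y px py z q : ℕ, IsLeaf N x ∧ IsLeaf N y ∧ IsRet N px ∧
          N.arc px x = true ∧ N.arc py px = true ∧ N.arc py y = true ∧
          N.arc z px = true ∧ z ≠ py ∧ N.arc q py = true) := by
      intro y0 o hy0 huy0 huo hoy0
      by_cases hol : IsLeaf N o
      · exact Or.inl ⟨o, y0, u, qq, hol, hy0, hoy0, huo, huy0, hqp⟩
      · have hoN : o ∈ N.verts := (N.arc_mem _ _ huo).2
        have hto : t o = t u :=
          le_antisymm (hmaxu o hoN hol) (ht.1.1 u o huo)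
        have horet : IsRet N o := ht.1.2.1 u o huo hto.symm
        obtain ⟨d, hd, _⟩ := card_one_unique (ret_outdeg N horet)
        have hod : N.arc o d = true := hd.2
        obtain ⟨e, he, hlt⟩ := ht.1.2.2.1 o (ret_internal N horet)
        have hed : e = d := child_unique (ret_outdeg N horet) hod e he
        have htd : t o < t d := hed ▸ hlt
        have hdl : IsLeaf N d := by
          by_contra hdl
          have := hmaxu d (N.arc_mem _ _ hod).2 hdl
          rw [hto] at htd
          linarith
        obtain ⟨p1, p2, hp12, hP1, hP2, hcomp⟩ := card_two_pair horet.2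
        by_cases hup1 : u = p1
        · exact Or.inr ⟨d, y0, o, u, p2, qq, hdl, hy0, horet, hod, huo, huy0,
            hP2.2, fun hh => hp12 (hup1 ▸ hh ▸ rfl), hqp⟩
        · have hup2 : u = p2 := by
            rcases hcomp u (N.arc_mem _ _ huo).1 huo with h | h
            · exact absurd h hup1
            · exact h
          exact Or.inr ⟨d, y0, o, u, p1, qq, hdl, hy0, horet, hod, huo, huy0,
            hP1.2, fun hh => hp12 (hh ▸ hup2), hqp⟩
    -- find the leaf child via the strict-increase witness
    obtain ⟨c, hc, hlt⟩ := ht.1.2.2.1 u (tree_internal N hu)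
    have hcl : IsLeaf N c := by
      by_contra hcl
      have := hmaxu c (N.arc_mem _ _ hc).2 hcl
      linarith
    obtain ⟨a, b, hab, hA, hB, hcomp⟩ := card_two_pair hu.2.2
    rcases hcomp c (N.arc_mem _ _ hc).2 hc with rfl | rfl
    · exact main2 c b hcl hc hB.2 (Ne.symm hab)
    · exact main2 c a hcl hc hA.2 hab
  by_cases hrm : t N.root = t m
  · -- the root attains the maximum: contradiction with card ≥ 3
    exfalso
    have hallτ : ∀ v ∈ N.verts, ¬ IsLeaf N v → t v = t N.root := by
      intro v hv hnl
      have h1 := t_root_le N t ht.1 hv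
      have h2 := hmaxle v hv hnl
      rw [hrm]
      linarith
    obtain ⟨c0, hc0, _⟩ := card_one_unique N.root_outdeg
    have hc0arc : N.arc N.root c0 = true := hc0.2
    by_cases hc0l : IsLeaf N c0
    · have hsub : N.verts ⊆ {N.root, c0} := by
        intro v hv
        rcases verts_sub_of_leaf_child N hc0arc hc0l v hv with rfl | rfl
        · exact Finset.mem_insert.mpr (Or.inl rfl)
        · exact Finset.mem_insert.mpr (Or.inr (Finset.mem_singleton.mpr rfl))
      have := Finset.card_le_card hsub
      have h2 : ({N.root, c0} : Finset ℕ).card ≤ 2 := by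
        apply le_trans (Finset.card_insert_le _ _)
        simp
      omega
    · have htc0 : t c0 = t N.root := hallτ c0 (N.arc_mem _ _ hc0arc).2 hc0l
      have hc0ret : IsRet N c0 := ht.1.2.1 N.root c0 hc0arc htc0.symm
      obtain ⟨p1, p2, hp12, hP1, hP2, _⟩ := card_two_pair hc0ret.2
      have hp1nl : ¬ IsLeaf N p1 := tail_not_leaf N hP1.2
      have hp2nl : ¬ IsLeaf N p2 := tail_not_leaf N hP2.2
      exact ht.1.2.2.2 c0 p1 p2 hc0ret hP1.2 hP2.2 hp12
        ⟨by rw [hallτ p1 hP1.1 hp1nl, htc0], by rw [hallτ p2 hP2.1 hp2nl, htc0]⟩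
  · -- the maximum vertex m is not the root
    have hmroot : m ≠ N.root := by
      intro hh
      exact hrm (by rw [hh])
    rcases vert_cases N hmS.1 hmroot with htree | hret | hleaf
    · exact main m htree hmaxle
    · obtain ⟨p, ⟨hp, heq⟩, _⟩ := ht.2 m hret
      have hpN : p ∈ N.verts := (N.arc_mem _ _ hp).1
      have hpnl : ¬ IsLeaf N p := tail_not_leaf N hp
      have hproot : p ≠ N.root := by
        intro hh
        exact hrm (by rw [← hh, heq])
      rcases vert_cases N hpN hproot with htreep | hretp | hleafp
      · refine main p htreep ?_
        intro v hv hnl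
        rw [heq]
        exact hmaxle v hv hnl
      · exfalso
        obtain ⟨e, he, hlt⟩ := ht.1.2.2.1 p (ret_internal N hretp)
        have hem : e = m := child_unique (ret_outdeg N hretp) hp e he
        rw [hem, ← heq] at hlt
        exact lt_irrefl _ hlt
      · exact absurd hleafp hpnl
    · exact absurd hleaf hmS.2
lemma orchard_of_hgt : ∀ (n : ℕ) (N : Network) (t : ℕ → ℝ), N.verts.card ≤ n →
    IsHGTConsistent N t → IsOrchard N := by
  intro n
  induction n with
  | zero =>
    intro N t hc _
    have := two_le_verts_card N
    omega
  | succ n ih =>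
    intro N t hc ht
    by_cases h3 : 3 ≤ N.verts.card
    · rcases exists_cherry N t ht h3 with
        ⟨x, y, p, q, hx, hy, hxy, hpx, hpy, hqp⟩ |
        ⟨x, y, px, py, z, q, hx, hy, hpxr, ha1, ha2, ha3, ha4, hz, ha5⟩
      · set N' := reduceCherry hx hy hxy hpx hpy hqp with hN'
        have hstep : CherryStep N N' :=
          ⟨x, y, Or.inl (cherry_reduces hx hy hxy hpx hpy hqp)⟩
        have hhgt' : IsHGTConsistent N' t := cherry_hgt hx hy hxy hpx hpy hqp ht
        have hcardeq : N'.verts.card = N.verts.card - 2 :=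
          cherry_card hx hy hxy hpx hpy hqp
        have hcard' : N'.verts.card ≤ n := by omega
        obtain ⟨Nf, chain, hsingle⟩ := ih N' t hcard' hhgt'
        exact ⟨Nf, Relation.ReflTransGen.head hstep chain, hsingle⟩
      · set N' := reduceRetCherry hx hy hpxr ha1 ha2 ha3 ha4 hz ha5 with hN'
        have hstep : CherryStep N N' :=
          ⟨x, y, Or.inr (rc_reduces hx hy hpxr ha1 ha2 ha3 ha4 hz ha5)⟩
        have hhgt' : IsHGTConsistent N' t := rc_hgt hx hy hpxr ha1 ha2 ha3 ha4 hz ha5 ht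
        have hcardeq : N'.verts.card = N.verts.card - 2 :=
          rc_card hx hy hpxr ha1 ha2 ha3 ha4 hz ha5
        have hcard' : N'.verts.card ≤ n := by omega
        obtain ⟨Nf, chain, hsingle⟩ := ih N' t hcard' hhgt'
        exact ⟨Nf, Relation.ReflTransGen.head hstep chain, hsingle⟩
    · have h2 := two_le_verts_card N
      have hc2 : N.verts.card = 2 := by omega
      exact ⟨N, Relation.ReflTransGen.refl, singleLeaf_of_card_two N hc2⟩
/-- From a non-temporal labelling with `h` inrets one obtains, by
`h` leaf additions, a network admitting an HGT-consistent labelling extending the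
given one; in particular `L_OR(N) ≤ V_OR(N)`. -/
theorem leafAdditions_fix_inrets (N : Network) (t : ℕ → ℝ)
    (ht : IsNonTemporal N t) :
    (∃ M : ℕ → Network, M 0 = N ∧
      (∀ i : ℕ, i < inretCount N t → IsLeafAddition (M i) (M (i + 1))) ∧
      ∃ t' : ℕ → ℝ, IsHGTConsistent (M (inretCount N t)) t' ∧
        ∀ v ∈ N.verts, t' v = t v) ∧
    LOR N ≤ VOR N := by
  constructor
  · exact fix_steps (inretCount N t) N t ht rfl
  · have hVne : {k : ℕ | ∃ t' : ℕ → ℝ, IsNonTemporal N t' ∧ inretCount N t' = k}.Nonempty :=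
      ⟨inretCount N t, t, ht, rfl⟩
    have hk : VOR N ∈ {k : ℕ | ∃ t' : ℕ → ℝ, IsNonTemporal N t' ∧ inretCount N t' = k} :=
      Nat.sInf_mem hVne
    obtain ⟨t'', ht'', hcount⟩ := hk
    obtain ⟨M, h0, hsteps, s', hHGT, hext⟩ := fix_steps (VOR N) N t'' ht'' hcount
    have horch : IsOrchard (M (VOR N)) :=
      orchard_of_hgt ((M (VOR N)).verts.card) (M (VOR N)) s' le_rfl hHGT
    have hreach : ReachableBy IsLeafAddition N (VOR N) IsOrchard :=
      ⟨M, h0, hsteps, horch⟩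
    exact Nat.sInf_le hreach

end PhyloNet
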